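/- arXiv:1504.06028 — 4 statements merged into one kernel-verified Lean document; each statement's English description precedes it below -/
import Mathlib

section
/- For a Markov chain W → X → Ŷ with finite alphabets, and any ρ > 0 such that L(W,ρ) < 1, the excess distortion probability satisfies P(ℓ(W,Ŷ) > ρ) ≥ 1 − (I(W;X) + log 2)/log(1/L(W,ρ)), where L(W,ρ) = sup_{w} P(ℓ(W,w) ≤ ρ) is the small ball probability and ℓ is a nonnegative distortion function. -/
open Finset Real

def IsPMF {α : Type*} [Fintype α] (p : α → ℝ) : Prop :=
  (∀ x, 0 ≤ p x) ∧ ∑ x, p x = 1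

noncomputable def KL2 {α : Type*} [Fintype α] (p q : α → ℝ) : ℝ :=
  ∑ x, p x * Real.logb 2 (p x / q x)

noncomputable def MI2 {α β : Type*} [Fintype α] [Fintype β] (p : α × β → ℝ) : ℝ :=
  ∑ x : α × β, p x * Real.logb 2 (p x / ((∑ b, p (x.1, b)) * (∑ a, p (a, x.2))))

noncomputable def H2 {α : Type*} [Fintype α] (p : α → ℝ) : ℝ :=
  -∑ x, p x * Real.logb 2 (p x)

noncomputable def push {α β : Type*} [Fintype α] (μ : α → ℝ) (K : α → β → ℝ) : β → ℝ :=
  fun y => ∑ x, μ x * K x y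

noncomputable def binH (p : ℝ) : ℝ :=
  -(p * Real.logb 2 p) - (1 - p) * Real.logb 2 (1 - p)

noncomputable def etaAt {α β : Type*} [Fintype α] [Fintype β]
    (μ : α → ℝ) (K : α → β → ℝ) : ℝ :=
  sSup { r | ∃ ν : α → ℝ, IsPMF ν ∧ (∀ x, μ x = 0 → ν x = 0) ∧ 0 < KL2 ν μ ∧
    r = KL2 (push ν K) (push μ K) / KL2 ν μ }

noncomputable def etaCh {α β : Type*} [Fintype α] [Fintype β] (K : α → β → ℝ) : ℝ :=
  sSup { r | ∃ μ ν : α → ℝ, IsPMF μ ∧ IsPMF ν ∧ (∀ x, μ x = 0 → ν x = 0) ∧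
    0 < KL2 ν μ ∧ r = KL2 (push ν K) (push μ K) / KL2 ν μ }

noncomputable def capacity2 {U V : Type*} [Fintype U] [Fintype V] (Ch : U → V → ℝ) : ℝ :=
  sSup { r | ∃ μ : U → ℝ, IsPMF μ ∧ r = MI2 (fun uv : U × V => μ uv.1 * Ch uv.1 uv.2) }

noncomputable def BSC (ε : ℝ) : Bool → Bool → ℝ := fun u v => if v = u then 1 - ε else ε


lemma log_sum_ineq {ι : Type*} [Fintype ι] (a b : ι → ℝ)
    (ha : ∀ i, 0 ≤ a i) (hb : ∀ i, 0 ≤ b i) (hab : ∀ i, b i = 0 → a i = 0) :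
    (∑ i, a i) * Real.log ((∑ i, a i) / (∑ i, b i)) ≤ ∑ i, a i * Real.log (a i / b i) := by
  set Sa := ∑ i, a i with hSa
  set Sb := ∑ i, b i with hSb
  rcases eq_or_lt_of_le (Finset.sum_nonneg (fun i _ => ha i)) with h0 | hSapos
  · -- Sa = 0, all a i = 0
    have hz : ∀ i ∈ Finset.univ, a i = 0 := by
      intro i _
      have := (Finset.sum_eq_zero_iff_of_nonneg (fun i _ => ha i)).1 h0.symm
      exact this i (Finset.mem_univ i)
    have : ∑ i, a i * Real.log (a i / b i) = 0 :=
      Finset.sum_eq_zero (fun i hi => by rw [hz i hi]; ring)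
    rw [this]
    have hz2 : Sa = 0 := by rw [hSa, ← h0]
    rw [hz2]; simp
  · have hSbpos : 0 < Sb := by
      rcases eq_or_lt_of_le (Finset.sum_nonneg (fun i _ => hb i)) with h0 | h
      · exfalso
        have hz : ∀ i ∈ Finset.univ, b i = 0 :=
          (Finset.sum_eq_zero_iff_of_nonneg (fun i _ => hb i)).1 h0.symm
        have : Sa = 0 := Finset.sum_eq_zero (fun i hi => hab i (hz i hi))
        linarith
      · exact h
    have key : ∀ i, a i - b i * (Sa / Sb) ≤ a i * Real.log (a i / b i) - a i * Real.log (Sa / Sb) := by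
      intro i
      rcases eq_or_lt_of_le (ha i) with h0 | hai
      · rw [← h0]
        have : 0 ≤ b i * (Sa / Sb) := mul_nonneg (hb i) (div_nonneg hSapos.le hSbpos.le)
        simp; linarith
      · have hbi : 0 < b i := by
          rcases eq_or_lt_of_le (hb i) with h0 | h
          · exfalso; have := hab i h0.symm; linarith
          · exact h
        have hx : 0 < b i * Sa / (a i * Sb) :=
          div_pos (mul_pos hbi hSapos) (mul_pos hai hSbpos)
        have hlog := Real.log_le_sub_one_of_pos hx
        have hrw : Real.log (b i * Sa / (a i * Sb)) =
            -(Real.log (a i / b i)) + Real.log (Sa / Sb) := by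
          rw [Real.log_div (by positivity : (b i * Sa) ≠ 0) (by positivity : (a i * Sb) ≠ 0),
            Real.log_mul (by positivity : (b i) ≠ 0) (by positivity : Sa ≠ 0),
            Real.log_mul (by positivity : (a i) ≠ 0) (by positivity : Sb ≠ 0),
            Real.log_div (by positivity : (a i) ≠ 0) (by positivity : (b i) ≠ 0),
            Real.log_div (by positivity : Sa ≠ 0) (by positivity : Sb ≠ 0)]
          ring
        rw [hrw] at hlog
        have h2 : a i * (-(Real.log (a i / b i)) + Real.log (Sa / Sb)) ≤
            a i * (b i * Sa / (a i * Sb) - 1) := by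
          exact mul_le_mul_of_nonneg_left hlog (ha i)
        have h3 : a i * (b i * Sa / (a i * Sb)) = b i * (Sa / Sb) := by
          field_simp
        nlinarith [h2, h3]
    have hsum : ∑ i, (a i - b i * (Sa / Sb)) = 0 := by
      rw [Finset.sum_sub_distrib, ← Finset.sum_mul]
      rw [← hSa, ← hSb]
      field_simp
      ring
    have : ∑ i, (a i - b i * (Sa / Sb)) ≤ ∑ i, (a i * Real.log (a i / b i) - a i * Real.log (Sa / Sb)) := Finset.sum_le_sum (fun i _ => key i)
    rw [hsum, Finset.sum_sub_distrib, ← Finset.sum_mul, ← hSa] at this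
    linarith

lemma dpi_binary {ι : Type*} [Fintype ι] (a b t : ι → ℝ)
    (ha : ∀ i, 0 ≤ a i) (hb : ∀ i, 0 ≤ b i) (hab : ∀ i, b i = 0 → a i = 0)
    (ht0 : ∀ i, 0 ≤ t i) (ht1 : ∀ i, t i ≤ 1) :
    (∑ i, a i * t i) * Real.log ((∑ i, a i * t i) / (∑ i, b i * t i))
      + (∑ i, a i * (1 - t i)) * Real.log ((∑ i, a i * (1 - t i)) / (∑ i, b i * (1 - t i)))
      ≤ ∑ i, a i * Real.log (a i / b i) := by
  have gen : ∀ s : ι → ℝ, (∀ i, 0 ≤ s i) →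
      (∑ i, a i * s i) * Real.log ((∑ i, a i * s i) / (∑ i, b i * s i)) ≤
        ∑ i, (a i * s i) * Real.log (a i / b i) := by
    intro s hs
    have h1 := log_sum_ineq (fun i => a i * s i) (fun i => b i * s i)
      (fun i => mul_nonneg (ha i) (hs i)) (fun i => mul_nonneg (hb i) (hs i))
      (fun i hi => by
        show a i * s i = 0
        rcases mul_eq_zero.1 (hi : b i * s i = 0) with h | h
        · rw [hab i h]; ring
        · rw [h]; ring)
    refine h1.trans (le_of_eq (Finset.sum_congr rfl (fun i _ => ?_)))
    show a i * s i * Real.log (a i * s i / (b i * s i)) = a i * s i * Real.log (a i / b i)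
    rcases eq_or_ne (s i) 0 with h | h
    · rw [h]; ring_nf
    · rw [mul_div_mul_right _ _ h]
  have g1 := gen t ht0
  have g2 := gen (fun i => 1 - t i) (fun i => by have := ht1 i; simp; linarith)
  have hsplit : ∑ i, ((a i * t i) * Real.log (a i / b i))
      + ∑ i, ((a i * (1 - t i)) * Real.log (a i / b i)) = ∑ i, a i * Real.log (a i / b i) := by
    rw [← Finset.sum_add_distrib]
    exact Finset.sum_congr rfl (fun i _ => by ring)
  calc _ ≤ ∑ i, ((a i * t i) * Real.log (a i / b i))
      + ∑ i, ((a i * (1 - t i)) * Real.log (a i / b i)) := add_le_add g1 g2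
    _ = _ := hsplit

lemma half_bound (x : ℝ) (hx : 0 ≤ x) : x - 1/2 ≤ x * Real.log (2*x) := by
  rcases eq_or_lt_of_le hx with h | h
  · rw [← h]; norm_num
  · have h1 : 0 < 1/(2*x) := by positivity
    have := Real.log_le_sub_one_of_pos h1
    rw [one_div, Real.log_inv] at this
    have hxx : x * (2*x)⁻¹ = 1/2 := by field_simp
    nlinarith [mul_le_mul_of_nonneg_left this hx, hxx]

lemma ent_bound (A : ℝ) (h0 : 0 ≤ A) (h1 : A ≤ 1) :
    -Real.log 2 ≤ A * Real.log A + (1 - A) * Real.log (1 - A) := by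
  have e1 : ∀ x : ℝ, 0 ≤ x → x - 1/2 - x * Real.log 2 ≤ x * Real.log x := by
    intro x hx
    rcases eq_or_lt_of_le hx with h | h
    · rw [← h]; norm_num
    · have := half_bound x hx
      rw [Real.log_mul (by norm_num) (ne_of_gt h)] at this
      nlinarith
  have := e1 A h0
  have := e1 (1 - A) (by linarith)
  linarith

lemma binary_bound (A B L : ℝ) (hA0 : 0 ≤ A) (hA1 : A ≤ 1) (hB0 : 0 ≤ B)
    (hBL : B ≤ L) (hL1 : L < 1) (hBA : B = 0 → A = 0) :
    A * Real.log (1 / L) - Real.log 2 ≤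
      A * Real.log (A / B) + (1 - A) * Real.log ((1 - A) / (1 - B)) := by
  have hB1 : B < 1 := lt_of_le_of_lt hBL hL1
  rcases eq_or_lt_of_le hA0 with h0 | hApos
  · rw [← h0]
    have : (0:ℝ) ≤ Real.log ((1 - 0) / (1 - B)) := by
      apply Real.log_nonneg
      rw [le_div_iff₀ (by linarith)]
      linarith
    have h2 : (0:ℝ) < Real.log 2 := Real.log_pos (by norm_num)
    simp only [zero_mul, sub_zero]
    nlinarith [this]
  · have hBpos : 0 < B := by
      rcases eq_or_lt_of_le hB0 with h | h
      · exfalso; have := hBA h.symm; linarith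
      · exact h
    have hLpos : 0 < L := lt_of_lt_of_le hBpos hBL
    -- term 1
    have t1 : A * Real.log A + A * Real.log (1/L) ≤ A * Real.log (A / B) := by
      have hlog : Real.log B ≤ Real.log L := Real.log_le_log hBpos hBL
      have : Real.log A + Real.log (1/L) ≤ Real.log (A / B) := by
        rw [Real.log_div (ne_of_gt hApos) (ne_of_gt hBpos), one_div, Real.log_inv]
        linarith
      nlinarith [mul_le_mul_of_nonneg_left this hA0]
    -- term 2
    have t2 : (1 - A) * Real.log (1 - A) ≤ (1 - A) * Real.log ((1 - A) / (1 - B)) := by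
      rcases eq_or_lt_of_le hA1 with h | h
      · rw [← h]; norm_num
      · have hpos : 0 < 1 - A := by linarith
        have hle : (1 - A) ≤ (1 - A) / (1 - B) := by
          rw [le_div_iff₀ (by linarith)]
          nlinarith
        exact mul_le_mul_of_nonneg_left (Real.log_le_log hpos hle) (by linarith)
    have := ent_bound A hA0 hA1
    linarith

/-- Bayes-risk excess-distortion lower bound via mutual information
and small ball probability, for a Markov chain W → X → Ŷ. -/
theorem excess_distortion_lower_bound
    {W X : Type*} [Fintype W] [Fintype X] [Nonempty W]
    (p : W × X × W → ℝ) (hp : IsPMF p)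
    (K : X → W → ℝ)
    (hMarkov : ∀ w x y, p (w, x, y) = (∑ y', p (w, x, y')) * K x y)
    (ℓ : W → W → ℝ) (hℓ : ∀ w w', 0 ≤ ℓ w w')
    (ρ : ℝ) (hρ : 0 < ρ)
    (L : ℝ)
    (hL : L = Finset.univ.sup' Finset.univ_nonempty
      (fun w' : W => ∑ z : W × X × W, if ℓ z.1 w' ≤ ρ then p z else 0))
    (hL0 : 0 < L) (hL1 : L < 1) :
    (∑ z : W × X × W, if ρ < ℓ z.1 z.2.2 then p z else 0) ≥
      1 - (MI2 (fun wx : W × X => ∑ y, p (wx.1, wx.2, y)) + 1) /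
        Real.logb 2 (1 / L) := by
  obtain ⟨hp0, hp1⟩ := hp
  set r : W × X → ℝ := fun wx => ∑ y, p (wx.1, wx.2, y) with hrdef
  set m1 : W → ℝ := fun w => ∑ x, r (w, x) with hm1def
  set m2 : X → ℝ := fun x => ∑ w, r (w, x) with hm2def
  set b : W × X → ℝ := fun wx => m1 wx.1 * m2 wx.2 with hbdef
  set t : W × X → ℝ := fun wx =>
    if m2 wx.2 = 0 then 0 else ∑ y, (if ℓ wx.1 y ≤ ρ then K wx.2 y else 0) with htdef
  -- basic positivity facts
  have hr0 : ∀ wx, 0 ≤ r wx := fun wx => Finset.sum_nonneg (fun y _ => hp0 _)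
  have hm10 : ∀ w, 0 ≤ m1 w := fun w => Finset.sum_nonneg (fun x _ => hr0 _)
  have hm20 : ∀ x, 0 ≤ m2 x := fun x => Finset.sum_nonneg (fun w _ => hr0 _)
  have hb0 : ∀ wx, 0 ≤ b wx := fun wx => mul_nonneg (hm10 _) (hm20 _)
  have hrm1 : ∀ w x, r (w, x) ≤ m1 w := fun w x =>
    Finset.single_le_sum (fun x' _ => hr0 (w, x')) (Finset.mem_univ x)
  have hrm2 : ∀ w x, r (w, x) ≤ m2 x := fun w x =>
    Finset.single_le_sum (fun w' _ => hr0 (w', x)) (Finset.mem_univ w)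
  have hpz : ∀ w x, r (w, x) = 0 → ∀ y, p (w, x, y) = 0 := by
    intro w x h y
    have := (Finset.sum_eq_zero_iff_of_nonneg (fun y' (_ : y' ∈ Finset.univ) => hp0 (w, x, y'))).1 h
    exact this y (Finset.mem_univ y)
  have hab : ∀ wx, b wx = 0 → r wx = 0 := by
    intro wx h
    rcases mul_eq_zero.1 h with h | h
    · exact le_antisymm (h ▸ hrm1 wx.1 wx.2) (hr0 wx)
    · exact le_antisymm (h ▸ hrm2 wx.1 wx.2) (hr0 wx)
  -- total masses
  have hrsum : ∑ wx : W × X, r wx = 1 := by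
    rw [← hp1]
    simp only [Fintype.sum_prod_type]
    rfl
  have hm1sum : ∑ w, m1 w = 1 := by
    rw [← hrsum]
    simp only [Fintype.sum_prod_type]
    rfl
  have hm2sum : ∑ x, m2 x = 1 := by
    rw [← hrsum]
    simp only [Fintype.sum_prod_type]
    exact Finset.sum_comm
  have hbsum : ∑ wx : W × X, b wx = 1 := by
    rw [Fintype.sum_prod_type]
    simp only [hbdef]
    rw [← Finset.sum_mul_sum]
    rw [hm1sum, hm2sum]; norm_num
  -- kernel facts
  have hK : ∀ x, m2 x ≠ 0 → (∀ y, 0 ≤ K x y) ∧ (∑ y, K x y = 1) := by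
    intro x hx
    have hxpos : 0 < m2 x := lt_of_le_of_ne (hm20 x) (Ne.symm hx)
    have hw0 : ∃ w, 0 < r (w, x) := by
      by_contra h
      push_neg at h
      have : m2 x = 0 := Finset.sum_eq_zero (fun w _ => le_antisymm (h w) (hr0 (w, x)))
      exact hx this
    obtain ⟨w0, hw0⟩ := hw0
    have hMark : ∀ y, p (w0, x, y) = r (w0, x) * K x y := fun y => hMarkov w0 x y
    constructor
    · intro y
      have h1 := hp0 (w0, x, y)
      rw [hMark y] at h1
      exact nonneg_of_mul_nonneg_right h1 hw0
    · have h1 : r (w0, x) = r (w0, x) * ∑ y, K x y := by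
        conv_lhs => rw [show r (w0, x) = ∑ y, p (w0, x, y) from rfl]
        rw [Finset.mul_sum]
        exact Finset.sum_congr rfl (fun y _ => hMark y)
      have h2 : r (w0, x) * 1 = r (w0, x) * ∑ y, K x y := by rw [mul_one]; exact h1
      exact (mul_left_cancel₀ (ne_of_gt hw0) h2).symm
  have ht0 : ∀ wx, 0 ≤ t wx := by
    intro wx
    simp only [htdef]
    split
    · exact le_refl 0
    · exact Finset.sum_nonneg (fun y _ => by
        split
        · exact (hK wx.2 (by assumption)).1 y
        · exact le_refl 0)
  have ht1 : ∀ wx, t wx ≤ 1 := by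
    intro wx
    simp only [htdef]
    split
    · exact zero_le_one
    · rename_i hx
      obtain ⟨hK0, hKsum⟩ := hK wx.2 hx
      calc ∑ y, (if ℓ wx.1 y ≤ ρ then K wx.2 y else 0) ≤ ∑ y, K wx.2 y := by
            refine Finset.sum_le_sum (fun y _ => ?_)
            split
            · exact le_refl _
            · exact hK0 y
        _ = 1 := hKsum
  -- identify A with the small-ball mass
  set A : ℝ := ∑ wx : W × X, r wx * t wx with hAdef
  have hterm : ∀ w x, r (w, x) * t (w, x) = ∑ y, (if ℓ w y ≤ ρ then p (w, x, y) else 0) := by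
    intro w x
    simp only [htdef]
    by_cases hx : m2 x = 0
    · have hrz : r (w, x) = 0 := le_antisymm (hx ▸ hrm2 w x) (hr0 (w, x))
      rw [if_pos hx, mul_zero]
      symm
      refine Finset.sum_eq_zero (fun y _ => ?_)
      rw [hpz w x hrz y]
      simp
    · rw [if_neg hx, Finset.mul_sum]
      refine Finset.sum_congr rfl (fun y _ => ?_)
      rw [mul_ite, mul_zero, ← hMarkov w x y]
  have hAeq : A = ∑ z : W × X × W, (if ℓ z.1 z.2.2 ≤ ρ then p z else 0) := by
    rw [hAdef]
    simp only [Fintype.sum_prod_type]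
    exact Finset.sum_congr rfl (fun w _ => Finset.sum_congr rfl (fun x _ => hterm w x))
  have hPe : (∑ z : W × X × W, if ρ < ℓ z.1 z.2.2 then p z else 0) = 1 - A := by
    have hsplit : A + (∑ z : W × X × W, if ρ < ℓ z.1 z.2.2 then p z else 0) = 1 := by
      rw [hAeq, ← Finset.sum_add_distrib, ← hp1]
      refine Finset.sum_congr rfl (fun z _ => ?_)
      rcases le_or_gt (ℓ z.1 z.2.2) ρ with h | h
      · rw [if_pos h, if_neg (not_lt.2 h), add_zero]
      · rw [if_neg (not_le.2 h), if_pos h, zero_add]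
    linarith
  have hA0 : 0 ≤ A := Finset.sum_nonneg (fun wx _ => mul_nonneg (hr0 wx) (ht0 wx))
  have hA1 : A ≤ 1 := by
    rw [hAdef, ← hrsum]
    exact Finset.sum_le_sum (fun wx _ => mul_le_of_le_one_right (hr0 wx) (ht1 wx))
  -- B and its bound by L
  set B : ℝ := ∑ wx : W × X, b wx * t wx with hBdef
  have hB0 : 0 ≤ B := Finset.sum_nonneg (fun wx _ => mul_nonneg (hb0 wx) (ht0 wx))
  have hSy : ∀ w' : W, (∑ w, if ℓ w w' ≤ ρ then m1 w else 0) ≤ L := by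
    intro w'
    have h1 : (∑ z : W × X × W, if ℓ z.1 w' ≤ ρ then p z else 0) ≤ L := by
      rw [hL]
      exact Finset.le_sup' (fun w' : W => ∑ z : W × X × W, if ℓ z.1 w' ≤ ρ then p z else 0)
        (Finset.mem_univ w')
    refine le_trans (le_of_eq ?_) h1
    simp only [Fintype.sum_prod_type]
    refine Finset.sum_congr rfl (fun w _ => ?_)
    by_cases h : ℓ w w' ≤ ρ
    · simp only [h, if_true]
      try rfl
    · simp only [h, if_false]
      try rw [Finset.sum_eq_zero (fun x _ => Finset.sum_eq_zero (fun y _ => rfl))]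
  have hBL : B ≤ L := by
    have hBcomm : B = ∑ x, ∑ w, b (w, x) * t (w, x) := by
      rw [hBdef]
      simp only [Fintype.sum_prod_type]
      exact Finset.sum_comm
    rw [hBcomm]
    have hinner : ∀ x, (∑ w, b (w, x) * t (w, x)) ≤ m2 x * L := by
      intro x
      by_cases hx : m2 x = 0
      · have : ∀ w, b (w, x) * t (w, x) = 0 := by
          intro w
          have : b (w, x) = 0 := by simp only [hbdef]; rw [hx, mul_zero]
          rw [this, zero_mul]
        rw [Finset.sum_eq_zero (fun w _ => this w), hx, zero_mul]
      · obtain ⟨hK0, hKsum⟩ := hK x hx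
        have htx : ∀ w, t (w, x) = ∑ y, (if ℓ w y ≤ ρ then K x y else 0) := by
          intro w; simp only [htdef]; rw [if_neg hx]
        have step1 : (∑ w, b (w, x) * t (w, x)) =
            m2 x * ∑ y, (∑ w, if ℓ w y ≤ ρ then m1 w else 0) * K x y := by
          have e1 : ∀ w, b (w, x) * t (w, x) =
              ∑ y, m2 x * ((if ℓ w y ≤ ρ then m1 w else 0) * K x y) := by
            intro w
            rw [htx w]
            show m1 w * m2 x * (∑ y, if ℓ w y ≤ ρ then K x y else 0) = _
            rw [Finset.mul_sum]
            refine Finset.sum_congr rfl (fun y _ => ?_)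
            by_cases h : ℓ w y ≤ ρ
            · simp only [h, if_true]; ring
            · simp only [h, if_false]; ring
          calc (∑ w, b (w, x) * t (w, x))
              = ∑ w, ∑ y, m2 x * ((if ℓ w y ≤ ρ then m1 w else 0) * K x y) :=
                Finset.sum_congr rfl (fun w _ => e1 w)
            _ = ∑ y, ∑ w, m2 x * ((if ℓ w y ≤ ρ then m1 w else 0) * K x y) := Finset.sum_comm
            _ = m2 x * ∑ y, (∑ w, if ℓ w y ≤ ρ then m1 w else 0) * K x y := by
                simp only [Finset.mul_sum, Finset.sum_mul]
        rw [step1]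
        refine mul_le_mul_of_nonneg_left ?_ (hm20 x)
        calc (∑ y, (∑ w, if ℓ w y ≤ ρ then m1 w else 0) * K x y)
            ≤ ∑ y, L * K x y := by
              refine Finset.sum_le_sum (fun y _ => ?_)
              exact mul_le_mul_of_nonneg_right (hSy y) (hK0 y)
          _ = L := by rw [← Finset.mul_sum, hKsum, mul_one]
    calc (∑ x, ∑ w, b (w, x) * t (w, x)) ≤ ∑ x, m2 x * L :=
          Finset.sum_le_sum (fun x _ => hinner x)
      _ = L := by rw [← Finset.sum_mul, hm2sum, one_mul]
  have hBA : B = 0 → A = 0 := by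
    intro h
    have hz := (Finset.sum_eq_zero_iff_of_nonneg
      (fun wx (_ : wx ∈ Finset.univ) => mul_nonneg (hb0 wx) (ht0 wx))).1 (hBdef ▸ h)
    rw [hAdef]
    refine Finset.sum_eq_zero (fun wx _ => ?_)
    rcases mul_eq_zero.1 (hz wx (Finset.mem_univ wx)) with h' | h'
    · rw [hab wx h', zero_mul]
    · rw [h', mul_zero]
  -- complementary sums
  have hAsum' : ∑ wx : W × X, r wx * (1 - t wx) = 1 - A := by
    have e : ∑ wx : W × X, r wx * (1 - t wx) = (∑ wx : W × X, r wx) - ∑ wx : W × X, r wx * t wx := by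
      rw [← Finset.sum_sub_distrib]
      exact Finset.sum_congr rfl (fun wx _ => by ring)
    rw [e, hrsum, ← hAdef]
  have hBsum' : ∑ wx : W × X, b wx * (1 - t wx) = 1 - B := by
    have e : ∑ wx : W × X, b wx * (1 - t wx) = (∑ wx : W × X, b wx) - ∑ wx : W × X, b wx * t wx := by
      rw [← Finset.sum_sub_distrib]
      exact Finset.sum_congr rfl (fun wx _ => by ring)
    rw [e, hbsum, ← hBdef]
  -- data processing + binary bound
  have hdpi := dpi_binary r b t hr0 hb0 hab ht0 ht1
  rw [← hAdef, ← hBdef, hAsum', hBsum'] at hdpi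
  have hbin := binary_bound A B L hA0 hA1 hB0 hBL hL1 hBA
  have hS : A * Real.log (1 / L) - Real.log 2 ≤ ∑ wx, r wx * Real.log (r wx / b wx) :=
    le_trans hbin hdpi
  -- identify MI2
  have hMI : MI2 (fun wx : W × X => ∑ y, p (wx.1, wx.2, y)) =
      (∑ wx, r wx * Real.log (r wx / b wx)) / Real.log 2 := by
    show (∑ wx : W × X, r wx * Real.logb 2 (r wx / b wx)) = _
    rw [Finset.sum_div]
    refine Finset.sum_congr rfl (fun wx _ => ?_)
    rw [Real.logb, mul_div_assoc]
  -- final arithmetic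
  have hlog2 : 0 < Real.log 2 := Real.log_pos (by norm_num)
  have hD : 0 < Real.log (1 / L) := Real.log_pos ((one_lt_div hL0).2 hL1)
  rw [ge_iff_le, hPe, hMI, Real.logb]
  have key : A * Real.log (1 / L) ≤ (∑ wx, r wx * Real.log (r wx / b wx)) + Real.log 2 := by
    linarith
  have heq : ((∑ wx, r wx * Real.log (r wx / b wx)) / Real.log 2 + 1) /
      (Real.log (1 / L) / Real.log 2) =
      ((∑ wx, r wx * Real.log (r wx / b wx)) + Real.log 2) / Real.log (1 / L) := by
    field_simp
  rw [heq]
  have : A ≤ ((∑ wx, r wx * Real.log (r wx / b wx)) + Real.log 2) / Real.log (1 / L) :=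
    (le_div_iff₀ hD).2 key
  linarith
end

section
/- The Dobrushin contraction coefficient of a channel upper bounds its strong data processing constant: for any channel K from a finite set 𝖶 to a finite set 𝖷, η(K) ≤ ϑ(K), where ϑ(K) = max_{w,w'} ‖K(·|w) − K(·|w')‖_TV and η(K) = sup over distinct input distributions μ ≠ ν of D(νK‖μK)/D(ν‖μ). -/
open Finset Real MeasureTheory intervalIntegral

lemma half_abs_bound {W X : Type*} [Fintype W] [Fintype X]
    (K : W → X → ℝ) (hK : ∀ w, IsPMF (K w)) (A : Finset X) (w w' : W) :
    ∑ x ∈ A, (K w x - K w' x) ≤ (1/2) * ∑ x, |K w x - K w' x| := by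
  have h1 : ∀ x ∈ A, (K w x - K w' x) ≤ ((K w x - K w' x) + |K w x - K w' x|) / 2 := by
    intro x _; have := le_abs_self (K w x - K w' x); linarith
  have h2 : ∑ x ∈ A, (K w x - K w' x) ≤ ∑ x ∈ A, ((K w x - K w' x) + |K w x - K w' x|) / 2 :=
    Finset.sum_le_sum h1
  have h3 : ∑ x ∈ A, ((K w x - K w' x) + |K w x - K w' x|) / 2
      ≤ ∑ x, ((K w x - K w' x) + |K w x - K w' x|) / 2 := by
    apply Finset.sum_le_sum_of_subset_of_nonneg (Finset.subset_univ A)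
    intro x _ _
    have := neg_abs_le (K w x - K w' x); linarith
  have h4 : ∑ x, ((K w x - K w' x) + |K w x - K w' x|) / 2
      = (1/2) * (∑ x, (K w x - K w' x) + ∑ x, |K w x - K w' x|) := by
    rw [← Finset.sum_add_distrib]; rw [Finset.mul_sum]; apply Finset.sum_congr rfl; intros; ring
  have h5 : ∑ x, (K w x - K w' x) = 0 := by
    rw [Finset.sum_sub_distrib, (hK w).2, (hK w').2]; ring
  rw [h4, h5] at h3; linarith

lemma lemA {W X : Type*} [Fintype W] [Fintype X]
    (K : W → X → ℝ) (hK : ∀ w, IsPMF (K w)) (ϑ : ℝ)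
    (hϑ : ∀ w w', (1/2) * ∑ x, |K w x - K w' x| ≤ ϑ)
    (c : W → ℝ) (hc : ∑ w, c w ≤ 0) :
    ∑ x, max (∑ w, c w * K w x) 0 ≤ ϑ * ∑ w, max (c w) 0 := by
  rcases isEmpty_or_nonempty W with hW | hW
  · simp
  have hϑ0 : 0 ≤ ϑ := by
    have := hϑ hW.some hW.some; simpa using this
  set g : X → ℝ := fun x => ∑ w, c w * K w x with hg
  set A : Finset X := Finset.univ.filter (fun x => 0 < g x) with hA
  set kA : W → ℝ := fun w => ∑ x ∈ A, K w x with hkA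
  set a : W → ℝ := fun w => max (c w) 0 with ha
  set b : W → ℝ := fun w => max (-c w) 0 with hb
  have hab : ∀ w, c w = a w - b w := fun w => (max_zero_sub_max_neg_zero_eq_self (c w)).symm
  have ha0 : ∀ w, 0 ≤ a w := fun w => le_max_right _ _
  have hb0 : ∀ w, 0 ≤ b w := fun w => le_max_right _ _
  have hkA0 : ∀ w, 0 ≤ kA w := fun w => Finset.sum_nonneg fun x _ => (hK w).1 x
  have hkA1 : ∀ w, kA w ≤ 1 := by
    intro w
    calc kA w ≤ ∑ x, K w x :=
          Finset.sum_le_sum_of_subset_of_nonneg (Finset.subset_univ A)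
            (fun x _ _ => (hK w).1 x)
    _ = 1 := (hK w).2
  -- step 1
  have step1 : ∑ x, max (g x) 0 = ∑ x ∈ A, g x := by
    rw [Finset.sum_filter]
    apply Finset.sum_congr rfl
    intro x _
    rcases lt_or_ge 0 (g x) with h | h
    · simp [h, max_eq_left h.le]
    · simp [not_lt.2 h, max_eq_right h]
  have step2 : ∑ x ∈ A, g x = ∑ w, c w * kA w := by
    simp only [hg, hkA, Finset.mul_sum]
    exact Finset.sum_comm
  set Sp := ∑ w, a w with hSp
  set Sm := ∑ w, b w with hSm
  have hSp0 : 0 ≤ Sp := Finset.sum_nonneg fun w _ => ha0 w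
  have hSpm : Sp ≤ Sm := by
    have : ∑ w, c w = Sp - Sm := by
      rw [hSp, hSm, ← Finset.sum_sub_distrib]
      exact Finset.sum_congr rfl fun w _ => hab w
    linarith
  have key : ∑ w, c w * kA w ≤ ϑ * Sp := by
    have expand : ∑ w, c w * kA w = ∑ w, a w * kA w - ∑ w, b w * kA w := by
      rw [← Finset.sum_sub_distrib]
      exact Finset.sum_congr rfl fun w _ => by rw [hab w]; ring
    rcases eq_or_lt_of_le hSp0 with h0 | h0
    · have haz : ∀ w, a w = 0 := by
        intro w
        have := (Finset.sum_eq_zero_iff_of_nonneg (fun w _ => ha0 w)).1 h0.symm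
        exact this w (Finset.mem_univ w)
      have : ∑ w, a w * kA w = 0 := Finset.sum_eq_zero fun w _ => by rw [haz w]; ring
      have hbk : 0 ≤ ∑ w, b w * kA w :=
        Finset.sum_nonneg fun w _ => mul_nonneg (hb0 w) (hkA0 w)
      rw [expand, this, ← h0]
      nlinarith
    · have hSm0 : 0 < Sm := lt_of_lt_of_le h0 hSpm
      have hbk : 0 ≤ ∑ w, b w * kA w :=
        Finset.sum_nonneg fun w _ => mul_nonneg (hb0 w) (hkA0 w)
      have hak : 0 ≤ ∑ w, a w * kA w :=
        Finset.sum_nonneg fun w _ => mul_nonneg (ha0 w) (hkA0 w)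
      -- double-sum bound
      have dbl : Sm * ∑ w, a w * kA w - Sp * ∑ w, b w * kA w ≤ ϑ * Sp * Sm := by
        have lhs_eq : Sm * ∑ w, a w * kA w - Sp * ∑ w, b w * kA w
            = ∑ w, ∑ w', a w * b w' * (kA w - kA w') := by
          have e1 : ∑ w, ∑ w', a w * b w' * (kA w - kA w')
              = ∑ w, (a w * kA w * Sm - a w * (∑ w', b w' * kA w')) := by
            apply Finset.sum_congr rfl; intro w _
            have e2 : ∀ w', a w * b w' * (kA w - kA w')
                = (a w * kA w) * b w' - a w * (b w' * kA w') := fun w' => by ring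
            simp_rw [e2]
            rw [Finset.sum_sub_distrib, ← Finset.mul_sum, ← Finset.mul_sum, ← hSm]
          rw [e1, Finset.sum_sub_distrib, ← Finset.sum_mul]
          have e3 : ∑ w, a w * (∑ w', b w' * kA w') = Sp * ∑ w', b w' * kA w' := by
            rw [← Finset.sum_mul, ← hSp]
          rw [e3]; ring
        rw [lhs_eq]
        have bnd : ∀ w w', a w * b w' * (kA w - kA w') ≤ a w * b w' * ϑ := by
          intro w w'
          apply mul_le_mul_of_nonneg_left _ (mul_nonneg (ha0 w) (hb0 w'))
          calc kA w - kA w' = ∑ x ∈ A, (K w x - K w' x) := by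
                rw [hkA, ← Finset.sum_sub_distrib]
          _ ≤ (1/2) * ∑ x, |K w x - K w' x| := half_abs_bound K hK A w w'
          _ ≤ ϑ := hϑ w w'
        calc ∑ w, ∑ w', a w * b w' * (kA w - kA w')
            ≤ ∑ w, ∑ w', a w * b w' * ϑ :=
              Finset.sum_le_sum fun w _ => Finset.sum_le_sum fun w' _ => bnd w w'
        _ = ϑ * Sp * Sm := by
              have e4 : ∀ w : W, ∑ w', a w * b w' * ϑ = a w * (Sm * ϑ) := by
                intro w
                rw [hSm, Finset.sum_mul, Finset.mul_sum]
                exact Finset.sum_congr rfl fun w' _ => by ring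
              simp_rw [e4]
              rw [← Finset.sum_mul, ← hSp]; ring
      rw [expand]
      rw [← mul_le_mul_iff_right₀ hSm0]
      calc Sm * (∑ w, a w * kA w - ∑ w, b w * kA w)
          = Sm * ∑ w, a w * kA w - Sm * ∑ w, b w * kA w := by ring
      _ ≤ Sm * ∑ w, a w * kA w - Sp * ∑ w, b w * kA w := by nlinarith
      _ ≤ ϑ * Sp * Sm := dbl
      _ = Sm * (ϑ * Sp) := by ring
  rw [step1, step2]; exact key

noncomputable def phi (p q γ : ℝ) : ℝ :=
  if 1 ≤ γ then max (p - γ * q) 0 / γ else max (γ * q - p) 0 / γ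

lemma phi_nonneg {p q : ℝ} (hp : 0 ≤ p) (hq : 0 ≤ q) (γ : ℝ) : 0 ≤ phi p q γ := by
  unfold phi
  rcases le_or_gt 1 γ with h | h
  · rw [if_pos h]
    exact div_nonneg (le_max_right _ _) (by linarith)
  · rw [if_neg (not_le.2 h)]
    rcases le_or_gt 0 γ with h0 | h0
    · exact div_nonneg (le_max_right _ _) h0
    · have : γ * q - p ≤ 0 := by nlinarith
      rw [max_eq_right this, zero_div]

lemma phi_le {p q : ℝ} (hp : 0 ≤ p) (hq : 0 ≤ q) (γ : ℝ) : phi p q γ ≤ p + q := by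
  unfold phi
  rcases le_or_gt 1 γ with h | h
  · rw [if_pos h]
    have hγ : 0 < γ := by linarith
    have h1 : max (p - γ * q) 0 ≤ p := by apply max_le _ hp; nlinarith
    calc max (p - γ * q) 0 / γ ≤ p / γ := by gcongr
    _ ≤ p := div_le_self hp h
    _ ≤ p + q := by linarith
  · rw [if_neg (not_le.2 h)]
    rcases le_or_gt 0 γ with h0 | h0
    · rcases eq_or_lt_of_le h0 with h0' | h0'
      · rw [← h0', div_zero]; linarith
      · have h1 : max (γ * q - p) 0 ≤ γ * q := by apply max_le _ (by positivity); linarith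
        calc max (γ * q - p) 0 / γ ≤ (γ * q) / γ := by gcongr
        _ = q := by field_simp
        _ ≤ p + q := by linarith
    · have : γ * q - p ≤ 0 := by nlinarith
      rw [max_eq_right this, zero_div]; linarith

lemma phi_measurable (p q : ℝ) : Measurable (phi p q) := by
  unfold phi
  have h1 : Measurable fun γ : ℝ => max (p - γ * q) 0 / γ := by
    apply Measurable.div _ measurable_id
    exact (measurable_const.sub (measurable_id.mul_const q)).max measurable_const
  have h2 : Measurable fun γ : ℝ => max (γ * q - p) 0 / γ := by
    apply Measurable.div _ measurable_id
    exact ((measurable_id.mul_const q).sub measurable_const).max measurable_const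
  exact Measurable.ite (measurableSet_le measurable_const measurable_id) h1 h2

lemma phi_intervalIntegrable {p q : ℝ} (hp : 0 ≤ p) (hq : 0 ≤ q) (a b : ℝ) :
    IntervalIntegrable (phi p q) volume a b := by
  rw [intervalIntegrable_iff]
  apply Measure.integrableOn_of_bounded (M := p + q)
  · exact ((measure_Ioc_lt_top).ne)
  · exact (phi_measurable p q).aestronglyMeasurable
  · apply ae_of_all
    intro γ
    rw [Real.norm_eq_abs, abs_le]
    constructor
    · linarith [phi_nonneg hp hq γ]
    · exact phi_le hp hq γ

lemma ae_ne_point (c : ℝ) : ∀ᵐ γ : ℝ, γ ≠ c := by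
  have : volume ({c} : Set ℝ) = 0 := Real.volume_singleton
  rw [MeasureTheory.ae_iff]
  simpa using this

lemma integral_linv (p q a b : ℝ) (ha : 0 < a) (hab : a ≤ b) :
    ∫ γ in a..b, (p * γ⁻¹ - q) = p * (Real.log b - Real.log a) - q * (b - a) := by
  have hb : 0 < b := lt_of_lt_of_le ha hab
  have h0 : (0:ℝ) ∉ Set.uIcc a b := Set.notMem_uIcc_of_lt ha hb
  have hi : IntervalIntegrable (fun γ : ℝ => γ⁻¹) volume a b :=
    intervalIntegrable_inv (fun x hx => by
      rcases Set.mem_uIcc.1 hx with ⟨h1,_⟩|⟨h1,_⟩ <;> intro h <;> simp [h] at h1 <;> linarith)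
      continuousOn_id
  rw [intervalIntegral.integral_sub ((hi.const_mul p)) (intervalIntegrable_const)]
  rw [intervalIntegral.integral_const_mul, integral_inv h0, intervalIntegral.integral_const]
  rw [Real.log_div hb.ne' ha.ne']
  simp [smul_eq_mul]; ring

lemma phi_integral {p q M : ℝ} (hp : 0 ≤ p) (hq : 0 ≤ q) (hacq : q = 0 → p = 0)
    (hM1 : 1 ≤ M) (hM : p / q ≤ M) :
    ∫ γ in (0:ℝ)..M, phi p q γ = p * Real.log (p / q) - p + q := by
  rcases eq_or_lt_of_le hq with hq0 | hq0
  · have hp0 : p = 0 := hacq hq0.symm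
    subst hp0
    rw [← hq0]
    simp [phi]
  rcases eq_or_lt_of_le hp with hp0 | hp0
  · -- p = 0, q > 0
    subst hp0
    have hsplit := intervalIntegral.integral_add_adjacent_intervals
      (phi_intervalIntegrable le_rfl hq 0 1) (phi_intervalIntegrable le_rfl hq 1 M)
    have I1 : ∫ γ in (0:ℝ)..1, phi 0 q γ = q := by
      have : ∫ γ in (0:ℝ)..1, phi 0 q γ = ∫ _ in (0:ℝ)..1, q := by
        apply intervalIntegral.integral_congr_ae
        filter_upwards [ae_ne_point 1] with γ hγ1 hmem
        rw [Set.uIoc_of_le (by norm_num : (0:ℝ) ≤ 1)] at hmem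
        obtain ⟨h0γ, hγle⟩ := hmem
        have hγlt : γ < 1 := lt_of_le_of_ne hγle hγ1
        rw [phi, if_neg (not_le.2 hγlt)]
        rw [sub_zero, max_eq_left (by positivity), mul_comm, mul_div_assoc, div_self h0γ.ne', mul_one]
      rw [this, intervalIntegral.integral_const]; simp
    have I2 : ∫ γ in (1:ℝ)..M, phi 0 q γ = 0 := by
      have : ∫ γ in (1:ℝ)..M, phi 0 q γ = ∫ _ in (1:ℝ)..M, (0:ℝ) := by
        apply intervalIntegral.integral_congr
        intro γ hγ
        rw [Set.uIcc_of_le hM1] at hγ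
        rw [phi, if_pos hγ.1]
        rw [zero_sub, max_eq_right (by nlinarith [hγ.1] : -(γ * q) ≤ 0), zero_div]
      rw [this, intervalIntegral.integral_zero]
    rw [← hsplit, I1, I2]
    simp
  · -- p > 0, q > 0
    set t := p / q with ht
    have ht0 : 0 < t := div_pos hp0 hq0
    have htq : q * t = p := by rw [ht]; field_simp
    rcases le_or_gt 1 t with h1t | h1t
    · -- 1 ≤ t ≤ M
      have htM : t ≤ M := hM
      have hsplit1 := intervalIntegral.integral_add_adjacent_intervals
        (phi_intervalIntegrable hp hq (0:ℝ) 1)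
        ((phi_intervalIntegrable hp hq (1:ℝ) t).trans (phi_intervalIntegrable hp hq t M))
      have hsplit2 := intervalIntegral.integral_add_adjacent_intervals
        (phi_intervalIntegrable hp hq (1:ℝ) t) (phi_intervalIntegrable hp hq t M)
      have I1 : ∫ γ in (0:ℝ)..1, phi p q γ = 0 := by
        have : ∫ γ in (0:ℝ)..1, phi p q γ = ∫ _ in (0:ℝ)..1, (0:ℝ) := by
          apply intervalIntegral.integral_congr_ae
          filter_upwards [ae_ne_point 1] with γ hγ1 hmem
          rw [Set.uIoc_of_le (by norm_num : (0:ℝ) ≤ 1)] at hmem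
          obtain ⟨h0γ, hγle⟩ := hmem
          have hγlt : γ < 1 := lt_of_le_of_ne hγle hγ1
          rw [phi, if_neg (not_le.2 hγlt)]
          have : γ * q - p ≤ 0 := by nlinarith
          rw [max_eq_right this, zero_div]
        rw [this, intervalIntegral.integral_zero]
      have I2 : ∫ γ in (1:ℝ)..t, phi p q γ = p * Real.log t - p + q := by
        have heq : ∫ γ in (1:ℝ)..t, phi p q γ = ∫ γ in (1:ℝ)..t, (p * γ⁻¹ - q) := by
          apply intervalIntegral.integral_congr
          intro γ hγ
          rw [Set.uIcc_of_le h1t] at hγ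
          obtain ⟨h1γ, hγt⟩ := hγ
          have hγ0 : (0:ℝ) < γ := by linarith
          rw [phi, if_pos h1γ]
          have : 0 ≤ p - γ * q := by nlinarith
          rw [max_eq_left this]
          field_simp
        rw [heq, integral_linv p q 1 t one_pos h1t]
        rw [Real.log_one]
        nlinarith
      have I3 : ∫ γ in t..M, phi p q γ = 0 := by
        have : ∫ γ in t..M, phi p q γ = ∫ _ in t..M, (0:ℝ) := by
          apply intervalIntegral.integral_congr
          intro γ hγ
          rw [Set.uIcc_of_le htM] at hγ
          obtain ⟨htγ, hγM⟩ := hγ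
          rw [phi, if_pos (le_trans h1t htγ)]
          have : p - γ * q ≤ 0 := by nlinarith
          rw [max_eq_right this, zero_div]
        rw [this, intervalIntegral.integral_zero]
      rw [← hsplit1, ← hsplit2, I1, I2, I3]
      ring
    · -- t < 1 ≤ M
      have hsplit1 := intervalIntegral.integral_add_adjacent_intervals
        (phi_intervalIntegrable hp hq (0:ℝ) t)
        ((phi_intervalIntegrable hp hq t 1).trans (phi_intervalIntegrable hp hq (1:ℝ) M))
      have hsplit2 := intervalIntegral.integral_add_adjacent_intervals
        (phi_intervalIntegrable hp hq t 1) (phi_intervalIntegrable hp hq (1:ℝ) M)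
      have I1 : ∫ γ in (0:ℝ)..t, phi p q γ = 0 := by
        have : ∫ γ in (0:ℝ)..t, phi p q γ = ∫ _ in (0:ℝ)..t, (0:ℝ) := by
          apply intervalIntegral.integral_congr
          intro γ hγ
          rw [Set.uIcc_of_le ht0.le] at hγ
          obtain ⟨h0γ, hγt⟩ := hγ
          rw [phi, if_neg (not_le.2 (lt_of_le_of_lt hγt h1t))]
          have : γ * q - p ≤ 0 := by nlinarith
          rw [max_eq_right this, zero_div]
        rw [this, intervalIntegral.integral_zero]
      have I2 : ∫ γ in t..(1:ℝ), phi p q γ = p * Real.log t - p + q := by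
        have heq : ∫ γ in t..(1:ℝ), phi p q γ = ∫ γ in t..(1:ℝ), -(p * γ⁻¹ - q) := by
          apply intervalIntegral.integral_congr_ae
          filter_upwards [ae_ne_point 1] with γ hγ1 hmem
          rw [Set.uIoc_of_le h1t.le] at hmem
          obtain ⟨htγ, hγle⟩ := hmem
          have hγlt : γ < 1 := lt_of_le_of_ne hγle hγ1
          have hγ0 : (0:ℝ) < γ := lt_trans ht0 htγ
          rw [phi, if_neg (not_le.2 hγlt)]
          have : 0 ≤ γ * q - p := by nlinarith
          rw [max_eq_left this]
          field_simp
          ring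
        rw [heq, intervalIntegral.integral_neg, integral_linv p q t 1 ht0 h1t.le]
        rw [Real.log_one]
        nlinarith
      have I3 : ∫ γ in (1:ℝ)..M, phi p q γ = 0 := by
        have : ∫ γ in (1:ℝ)..M, phi p q γ = ∫ _ in (1:ℝ)..M, (0:ℝ) := by
          apply intervalIntegral.integral_congr
          intro γ hγ
          rw [Set.uIcc_of_le hM1] at hγ
          obtain ⟨h1γ, hγM⟩ := hγ
          rw [phi, if_pos h1γ]
          have : p - γ * q ≤ 0 := by nlinarith
          rw [max_eq_right this, zero_div]
        rw [this, intervalIntegral.integral_zero]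
      rw [← hsplit1, ← hsplit2, I1, I2, I3]
      ring

lemma integral_identity (M : ℝ) (hM1 : 1 ≤ M) {α : Type*} [Fintype α] (ρ σ : α → ℝ)
    (hρ : ∀ a, 0 ≤ ρ a) (hσ : ∀ a, 0 ≤ σ a)
    (hρ1 : ∑ a, ρ a = 1) (hσ1 : ∑ a, σ a = 1) (hacρ : ∀ a, σ a = 0 → ρ a = 0)
    (hMρ : ∀ a, ρ a / σ a ≤ M) :
    ∫ γ in (0:ℝ)..M, (∑ a, phi (ρ a) (σ a) γ) = Real.log 2 * KL2 ρ σ := by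
  rw [intervalIntegral.integral_finset_sum
    (fun a _ => phi_intervalIntegrable (hρ a) (hσ a) 0 M)]
  have hterm : ∀ a, ∫ γ in (0:ℝ)..M, phi (ρ a) (σ a) γ
      = ρ a * Real.log (ρ a / σ a) - ρ a + σ a := fun a =>
    phi_integral (hρ a) (hσ a) (hacρ a) hM1 (hMρ a)
  rw [Finset.sum_congr rfl fun a _ => hterm a]
  have : ∀ a, ρ a * Real.log (ρ a / σ a) - ρ a + σ a
      = Real.log 2 * (ρ a * Real.logb 2 (ρ a / σ a)) - ρ a + σ a := by
    intro a
    rw [Real.logb]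
    field_simp
  rw [Finset.sum_congr rfl fun a _ => this a]
  rw [Finset.sum_add_distrib, Finset.sum_sub_distrib, ← Finset.mul_sum, hρ1, hσ1]
  rw [KL2]
  ring

lemma pointwise_le {W X : Type*} [Fintype W] [Fintype X]
    (K : W → X → ℝ) (hK : ∀ w, IsPMF (K w)) (ϑ : ℝ)
    (hϑ : ∀ w w', (1/2) * ∑ x, |K w x - K w' x| ≤ ϑ) (hϑ0 : 0 ≤ ϑ)
    (μ ν : W → ℝ) (hμ : IsPMF μ) (hν : IsPMF ν) (γ : ℝ) (hγ : 0 ≤ γ) :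
    ∑ x, phi (push ν K x) (push μ K x) γ ≤ ϑ * ∑ w, phi (ν w) (μ w) γ := by
  rcases eq_or_lt_of_le hγ with h0 | h0
  · rw [← h0]
    have hz : ∀ p q : ℝ, phi p q 0 = 0 := by
      intro p q; rw [phi, if_neg (by norm_num)]; exact div_zero _
    simp [hz]
  rcases le_or_gt 1 γ with h1 | h1
  · have key := lemA K hK ϑ hϑ (fun w => ν w - γ * μ w)
      (by
        rw [Finset.sum_sub_distrib, ← Finset.mul_sum, hν.2, hμ.2]
        nlinarith)
    have inner : ∀ x, ∑ w, (ν w - γ * μ w) * K w x = push ν K x - γ * push μ K x := by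
      intro x
      unfold push
      rw [Finset.mul_sum, ← Finset.sum_sub_distrib]
      exact Finset.sum_congr rfl fun w _ => by ring
    simp only [inner] at key
    calc ∑ x, phi (push ν K x) (push μ K x) γ
        = (∑ x, max (push ν K x - γ * push μ K x) 0) / γ := by
          rw [Finset.sum_div]
          exact Finset.sum_congr rfl fun x _ => by rw [phi, if_pos h1]
    _ ≤ (ϑ * ∑ w, max (ν w - γ * μ w) 0) / γ := by
          gcongr
    _ = ϑ * ∑ w, phi (ν w) (μ w) γ := by
          rw [mul_div_assoc, Finset.sum_div]
          congr 1
          exact Finset.sum_congr rfl fun w _ => by rw [phi, if_pos h1]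
  · have key := lemA K hK ϑ hϑ (fun w => γ * μ w - ν w)
      (by
        rw [Finset.sum_sub_distrib, ← Finset.mul_sum, hν.2, hμ.2]
        nlinarith)
    have inner : ∀ x, ∑ w, (γ * μ w - ν w) * K w x = γ * push μ K x - push ν K x := by
      intro x
      unfold push
      rw [Finset.mul_sum, ← Finset.sum_sub_distrib]
      exact Finset.sum_congr rfl fun w _ => by ring
    simp only [inner] at key
    calc ∑ x, phi (push ν K x) (push μ K x) γ
        = (∑ x, max (γ * push μ K x - push ν K x) 0) / γ := by
          rw [Finset.sum_div]
          exact Finset.sum_congr rfl fun x _ => by rw [phi, if_neg (not_le.2 h1)]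
    _ ≤ (ϑ * ∑ w, max (γ * μ w - ν w) 0) / γ := by
          gcongr
    _ = ϑ * ∑ w, phi (ν w) (μ w) γ := by
          rw [mul_div_assoc, Finset.sum_div]
          congr 1
          exact Finset.sum_congr rfl fun w _ => by rw [phi, if_neg (not_le.2 h1)]


/-- the Dobrushin contraction coefficient upper-bounds the SDPI constant:
for any ϑ dominating all pairwise total variations of the channel rows (in particular the
maximum, i.e. the Dobrushin coefficient), the relative-entropy contraction ratio is ≤ ϑ. -/
theorem dobrushin_bounds_sdpi
    {W X : Type*} [Fintype W] [Fintype X]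
    (K : W → X → ℝ) (hK : ∀ w, IsPMF (K w))
    (ϑ : ℝ)
    (hϑ : ∀ w w', (1/2) * ∑ x, |K w x - K w' x| ≤ ϑ)
    (μ ν : W → ℝ) (hμ : IsPMF μ) (hν : IsPMF ν)
    (hac : ∀ w, μ w = 0 → ν w = 0) (hpos : 0 < KL2 ν μ) :
    KL2 (push ν K) (push μ K) ≤ ϑ * KL2 ν μ := by
  have hW : Nonempty W := by
    by_contra h
    rw [not_nonempty_iff] at h
    have h2 := hμ.2
    rw [Finset.univ_eq_empty, Finset.sum_empty] at h2
    norm_num at h2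
  have hϑ0 : 0 ≤ ϑ := by
    have := hϑ (Classical.arbitrary W) (Classical.arbitrary W)
    simpa using this
  set P : X → ℝ := push ν K with hP
  set Q : X → ℝ := push μ K with hQ
  have hPnn : ∀ x, 0 ≤ P x := fun x =>
    Finset.sum_nonneg fun w _ => mul_nonneg (hν.1 w) ((hK w).1 x)
  have hQnn : ∀ x, 0 ≤ Q x := fun x =>
    Finset.sum_nonneg fun w _ => mul_nonneg (hμ.1 w) ((hK w).1 x)
  have hsum : ∀ ρ : W → ℝ, IsPMF ρ → ∑ x, push ρ K x = 1 := by
    intro ρ hρ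
    unfold push
    rw [Finset.sum_comm]
    have : ∀ w, ∑ x, ρ w * K w x = ρ w := by
      intro w; rw [← Finset.mul_sum, (hK w).2, mul_one]
    rw [Finset.sum_congr rfl fun w _ => this w, hρ.2]
  have hPsum : ∑ x, P x = 1 := hsum ν hν
  have hQsum : ∑ x, Q x = 1 := hsum μ hμ
  have hacX : ∀ x, Q x = 0 → P x = 0 := by
    intro x h
    have hall : ∀ w ∈ Finset.univ, μ w * K w x = 0 := by
      have := (Finset.sum_eq_zero_iff_of_nonneg
        (fun w _ => mul_nonneg (hμ.1 w) ((hK w).1 x))).1 h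
      exact this
    apply Finset.sum_eq_zero
    intro w _
    by_cases hw : ν w = 0
    · rw [hw, zero_mul]
    · have hμw : μ w ≠ 0 := fun h' => hw (hac w h')
      have := hall w (Finset.mem_univ w)
      rcases mul_eq_zero.1 this with h' | h'
      · exact absurd h' hμw
      · rw [h', mul_zero]
  obtain ⟨M, hM1, hMw, hMx⟩ : ∃ M : ℝ, 1 ≤ M ∧ (∀ w, ν w / μ w ≤ M) ∧ (∀ x, P x / Q x ≤ M) := by
    refine ⟨1 + (∑ w, if μ w = 0 then 0 else ν w / μ w)
      + (∑ x, if Q x = 0 then 0 else P x / Q x), ?_, ?_, ?_⟩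
    · have hS1 : 0 ≤ ∑ w, if μ w = 0 then 0 else ν w / μ w :=
        Finset.sum_nonneg fun w _ => by
          split
          · exact le_rfl
          · exact div_nonneg (hν.1 w) (hμ.1 w)
      have hS2 : 0 ≤ ∑ x, if Q x = 0 then 0 else P x / Q x :=
        Finset.sum_nonneg fun x _ => by
          split
          · exact le_rfl
          · exact div_nonneg (hPnn x) (hQnn x)
      linarith
    · intro w
      have hS1 : 0 ≤ ∑ w, if μ w = 0 then 0 else ν w / μ w :=
        Finset.sum_nonneg fun w _ => by
          split
          · exact le_rfl
          · exact div_nonneg (hν.1 w) (hμ.1 w)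
      have hS2 : 0 ≤ ∑ x, if Q x = 0 then 0 else P x / Q x :=
        Finset.sum_nonneg fun x _ => by
          split
          · exact le_rfl
          · exact div_nonneg (hPnn x) (hQnn x)
      by_cases hw : μ w = 0
      · rw [hac w hw, zero_div]; linarith
      · have hle : ν w / μ w ≤ ∑ w', if μ w' = 0 then 0 else ν w' / μ w' := by
          have := Finset.single_le_sum (f := fun w' => if μ w' = 0 then 0 else ν w' / μ w')
            (fun w' _ => by
              split
              · exact le_rfl
              · exact div_nonneg (hν.1 w') (hμ.1 w')) (Finset.mem_univ w)
          simpa only [if_neg hw] using this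
        linarith
    · intro x
      have hS1 : 0 ≤ ∑ w, if μ w = 0 then 0 else ν w / μ w :=
        Finset.sum_nonneg fun w _ => by
          split
          · exact le_rfl
          · exact div_nonneg (hν.1 w) (hμ.1 w)
      have hS2 : 0 ≤ ∑ x, if Q x = 0 then 0 else P x / Q x :=
        Finset.sum_nonneg fun x _ => by
          split
          · exact le_rfl
          · exact div_nonneg (hPnn x) (hQnn x)
      by_cases hx : Q x = 0
      · rw [hacX x hx, zero_div]; linarith
      · have hle : P x / Q x ≤ ∑ x', if Q x' = 0 then 0 else P x' / Q x' := by
          have := Finset.single_le_sum (f := fun x' => if Q x' = 0 then 0 else P x' / Q x')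
            (fun x' _ => by
              split
              · exact le_rfl
              · exact div_nonneg (hPnn x') (hQnn x')) (Finset.mem_univ x)
          simpa only [if_neg hx] using this
        linarith
  have hlog2 : 0 < Real.log 2 := Real.log_pos (by norm_num)
  have Iin := integral_identity M hM1 ν μ hν.1 hμ.1 hν.2 hμ.2 hac hMw
  have Iout := integral_identity M hM1 P Q hPnn hQnn hPsum hQsum hacX hMx
  have hIntOut : IntervalIntegrable (fun γ => ∑ x, phi (P x) (Q x) γ) volume 0 M := by
    have h1 := IntervalIntegrable.sum (μ := volume) (a := (0:ℝ)) (b := M) Finset.univ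
      (f := fun x γ => phi (P x) (Q x) γ)
      (fun x _ => phi_intervalIntegrable (hPnn x) (hQnn x) 0 M)
    have h2 : (∑ x, fun γ => phi (P x) (Q x) γ) = fun γ => ∑ x, phi (P x) (Q x) γ := by
      ext γ
      simp [Finset.sum_apply]
    rwa [h2] at h1
  have hIntIn : IntervalIntegrable (fun γ => ∑ w, phi (ν w) (μ w) γ) volume 0 M := by
    have h1 := IntervalIntegrable.sum (μ := volume) (a := (0:ℝ)) (b := M) Finset.univ
      (f := fun w γ => phi (ν w) (μ w) γ)
      (fun w _ => phi_intervalIntegrable (hν.1 w) (hμ.1 w) 0 M)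
    have h2 : (∑ w, fun γ => phi (ν w) (μ w) γ) = fun γ => ∑ w, phi (ν w) (μ w) γ := by
      ext γ
      simp [Finset.sum_apply]
    rwa [h2] at h1
  have hmono : ∫ γ in (0:ℝ)..M, (∑ x, phi (P x) (Q x) γ)
      ≤ ∫ γ in (0:ℝ)..M, ϑ * (∑ w, phi (ν w) (μ w) γ) := by
    apply intervalIntegral.integral_mono_on (by linarith) hIntOut (hIntIn.const_mul ϑ)
    intro γ hγ
    exact pointwise_le K hK ϑ hϑ hϑ0 μ ν hμ hν γ hγ.1
  rw [intervalIntegral.integral_const_mul, Iin, Iout] at hmono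
  have : Real.log 2 * KL2 P Q ≤ Real.log 2 * (ϑ * KL2 ν μ) := by
    calc Real.log 2 * KL2 P Q ≤ ϑ * (Real.log 2 * KL2 ν μ) := hmono
    _ = Real.log 2 * (ϑ * KL2 ν μ) := by ring
  exact (mul_le_mul_iff_right₀ hlog2).1 this
end

section
/- Tensorization of the SDPI constant: for input distributions μ₁,…,μ_n on finite sets and channels K₁,…,K_n, the SDPI constant of the product satisfies η(μ₁⊗⋯⊗μ_n, K₁⊗⋯⊗K_n) = max_{1≤i≤n} η(μ_i, K_i). -/
open Finset Real

set_option linter.unusedSectionVars false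
set_option linter.unusedVariables false


/-- log-sum inequality -/
lemma logsum_aux {ι : Type*} (s : Finset ι) (a b : ι → ℝ)
    (ha : ∀ i ∈ s, 0 ≤ a i) (hb : ∀ i ∈ s, 0 ≤ b i)
    (hab : ∀ i ∈ s, b i = 0 → a i = 0) :
    (∑ i ∈ s, a i) * Real.log ((∑ i ∈ s, a i) / (∑ i ∈ s, b i)) ≤
      ∑ i ∈ s, a i * Real.log (a i / b i) := by
  set A := ∑ i ∈ s, a i with hA
  set B := ∑ i ∈ s, b i with hB
  rcases eq_or_lt_of_le (Finset.sum_nonneg ha) with h0 | hApos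
  · have hz : ∀ i ∈ s, a i = 0 := by
      intro i hi
      exact (Finset.sum_eq_zero_iff_of_nonneg ha).mp h0.symm i hi
    have : ∑ i ∈ s, a i * Real.log (a i / b i) = 0 :=
      Finset.sum_eq_zero fun i hi => by rw [hz i hi, zero_mul]
    rw [this, hA, ← h0, zero_mul]
  · have hBpos : 0 < B := by
      rcases eq_or_lt_of_le (Finset.sum_nonneg hb) with h0' | h
      · exfalso
        have hbz : ∀ i ∈ s, b i = 0 :=
          fun i hi => (Finset.sum_eq_zero_iff_of_nonneg hb).mp h0'.symm i hi
        have : A = 0 := Finset.sum_eq_zero fun i hi => hab i hi (hbz i hi)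
        exact absurd this (ne_of_gt hApos)
      · exact h
    have key : ∀ i ∈ s, a i * Real.log (A / B) + (a i - b i * (A / B)) ≤
        a i * Real.log (a i / b i) := by
      intro i hi
      rcases eq_or_lt_of_le (ha i hi) with hz | hpos
      · rw [← hz, zero_mul, zero_mul, zero_add, zero_sub]
        have h1 : 0 ≤ A / B := by positivity
        have h2 : 0 ≤ b i * (A / B) := mul_nonneg (hb i hi) h1
        linarith
      · have hbi : 0 < b i := by
          rcases eq_or_lt_of_le (hb i hi) with h | h
          · exact absurd (hab i hi h.symm) (ne_of_gt hpos)
          · exact h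
        set t := (b i * A) / (a i * B) with ht
        have htpos : 0 < t := by positivity
        have hlog : Real.log t ≤ t - 1 := Real.log_le_sub_one_of_pos htpos
        have e1 : Real.log (a i / b i) - Real.log (A / B) = -Real.log t := by
          rw [ht, Real.log_div (ne_of_gt hpos) (ne_of_gt hbi),
            Real.log_div (ne_of_gt hApos) (ne_of_gt hBpos),
            Real.log_div (by positivity) (by positivity),
            Real.log_mul (ne_of_gt hbi) (ne_of_gt hApos),
            Real.log_mul (ne_of_gt hpos) (ne_of_gt hBpos)]
          ring
        have e2 : a i * t = b i * (A / B) := by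
          rw [ht]
          field_simp
        nlinarith [mul_le_mul_of_nonneg_left hlog (le_of_lt hpos)]
    calc A * Real.log (A / B)
        = ∑ i ∈ s, (a i * Real.log (A / B) + (a i - b i * (A / B))) := by
          rw [Finset.sum_add_distrib, Finset.sum_sub_distrib, ← Finset.sum_mul,
            ← Finset.sum_mul, ← hA, ← hB, mul_div_assoc' B A B, mul_comm B A,
            mul_div_assoc, div_self (ne_of_gt hBpos), mul_one, sub_self, add_zero]
      _ ≤ ∑ i ∈ s, a i * Real.log (a i / b i) := Finset.sum_le_sum key

/-- log-sum inequality, base-2 version -/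
lemma logbsum_aux {ι : Type*} (s : Finset ι) (a b : ι → ℝ)
    (ha : ∀ i ∈ s, 0 ≤ a i) (hb : ∀ i ∈ s, 0 ≤ b i)
    (hab : ∀ i ∈ s, b i = 0 → a i = 0) :
    (∑ i ∈ s, a i) * Real.logb 2 ((∑ i ∈ s, a i) / (∑ i ∈ s, b i)) ≤
      ∑ i ∈ s, a i * Real.logb 2 (a i / b i) := by
  have h2 : (0:ℝ) < Real.log 2 := Real.log_pos one_lt_two
  simp only [Real.logb, ← mul_div_assoc]
  rw [← Finset.sum_div]
  gcongr
  exact logsum_aux s a b ha hb hab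

section Basics
variable {α β : Type*} [Fintype α] [Fintype β]

lemma KL2_nonneg {p q : α → ℝ} (hp : IsPMF p) (hq : IsPMF q)
    (hac : ∀ x, q x = 0 → p x = 0) : 0 ≤ KL2 p q := by
  have h := logbsum_aux Finset.univ p q (fun i _ => hp.1 i) (fun i _ => hq.1 i)
    (fun i _ h => hac i h)
  rw [hp.2, hq.2] at h
  simpa [KL2] using h

lemma KL2_self (p : α → ℝ) : KL2 p p = 0 := by
  refine Finset.sum_eq_zero fun x _ => ?_
  by_cases h : p x = 0 <;> simp [h, div_self]

lemma push_nonneg {μ : α → ℝ} {K : α → β → ℝ} (hμ : ∀ x, 0 ≤ μ x)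
    (hK : ∀ x y, 0 ≤ K x y) (y : β) : 0 ≤ push μ K y :=
  Finset.sum_nonneg fun x _ => mul_nonneg (hμ x) (hK x y)

lemma push_isPMF {μ : α → ℝ} {K : α → β → ℝ} (hμ : IsPMF μ)
    (hK : ∀ x, IsPMF (K x)) : IsPMF (push μ K) := by
  refine ⟨push_nonneg hμ.1 (fun x y => (hK x).1 y), ?_⟩
  unfold push
  rw [Finset.sum_comm]
  calc ∑ x, ∑ y, μ x * K x y = ∑ x, μ x * ∑ y, K x y := by
        simp_rw [Finset.mul_sum]
    _ = 1 := by simp_rw [fun x => (hK x).2, mul_one, hμ.2]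

lemma push_absCont {μ ν : α → ℝ} {K : α → β → ℝ} (hν : ∀ x, 0 ≤ ν x)
    (hμ : ∀ x, 0 ≤ μ x) (hK : ∀ x y, 0 ≤ K x y)
    (hac : ∀ x, μ x = 0 → ν x = 0) :
    ∀ y, push μ K y = 0 → push ν K y = 0 := by
  intro y h
  have hz : ∀ x ∈ Finset.univ, μ x * K x y = 0 :=
    (Finset.sum_eq_zero_iff_of_nonneg
      (fun x _ => mul_nonneg (hμ x) (hK x y))).mp h
  refine Finset.sum_eq_zero fun x _ => ?_
  rcases mul_eq_zero.mp (hz x (Finset.mem_univ x)) with h1 | h1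
  · rw [hac x h1, zero_mul]
  · rw [h1, mul_zero]

/-- data processing inequality -/
lemma KL2_push_le {μ ν : α → ℝ} {K : α → β → ℝ} (hμ : IsPMF μ) (hν : IsPMF ν)
    (hK : ∀ x, IsPMF (K x)) (hac : ∀ x, μ x = 0 → ν x = 0) :
    KL2 (push ν K) (push μ K) ≤ KL2 ν μ := by
  have step1 : KL2 (push ν K) (push μ K) ≤
      ∑ y, ∑ x, (ν x * K x y) * Real.logb 2 ((ν x * K x y) / (μ x * K x y)) := by
    refine Finset.sum_le_sum fun y _ => ?_
    exact logbsum_aux Finset.univ (fun x => ν x * K x y) (fun x => μ x * K x y)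
      (fun x _ => mul_nonneg (hν.1 x) ((hK x).1 y))
      (fun x _ => mul_nonneg (hμ.1 x) ((hK x).1 y))
      (fun x _ h => by
        rcases mul_eq_zero.mp h with h1 | h1
        · simp [hac x h1]
        · simp [h1])
  refine step1.trans_eq ?_
  rw [Finset.sum_comm]
  refine Finset.sum_congr rfl fun x _ => ?_
  have hterm : ∀ y, (ν x * K x y) * Real.logb 2 ((ν x * K x y) / (μ x * K x y)) =
      (ν x * K x y) * Real.logb 2 (ν x / μ x) := by
    intro y
    by_cases h : ν x * K x y = 0
    · rw [h, zero_mul, zero_mul]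
    · have hKxy : K x y ≠ 0 := fun hk => h (by rw [hk, mul_zero])
      rw [mul_div_mul_right _ _ hKxy]
  simp_rw [hterm]
  calc ∑ y, ν x * K x y * Real.logb 2 (ν x / μ x)
      = (ν x * Real.logb 2 (ν x / μ x)) * ∑ y, K x y := by
        rw [Finset.mul_sum]; exact Finset.sum_congr rfl fun y _ => by ring
    _ = ν x * Real.logb 2 (ν x / μ x) := by rw [(hK x).2, mul_one]

/-- the set appearing in `etaAt` -/
def etaSet (μ : α → ℝ) (K : α → β → ℝ) : Set ℝ :=
  { r | ∃ ν : α → ℝ, IsPMF ν ∧ (∀ x, μ x = 0 → ν x = 0) ∧ 0 < KL2 ν μ ∧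
    r = KL2 (push ν K) (push μ K) / KL2 ν μ }

lemma etaAt_eq (μ : α → ℝ) (K : α → β → ℝ) : etaAt μ K = sSup (etaSet μ K) := rfl

lemma etaSet_bddAbove {μ : α → ℝ} {K : α → β → ℝ} (hμ : IsPMF μ)
    (hK : ∀ x, IsPMF (K x)) : BddAbove (etaSet μ K) := by
  refine ⟨1, fun r hr => ?_⟩
  obtain ⟨ν, hν, hac, hpos, rfl⟩ := hr
  rw [div_le_one hpos]
  exact KL2_push_le hμ hν hK hac

lemma etaAt_nonneg {μ : α → ℝ} {K : α → β → ℝ} (hμ : IsPMF μ)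
    (hK : ∀ x, IsPMF (K x)) : 0 ≤ etaAt μ K := by
  refine Real.sSup_nonneg fun r hr => ?_
  obtain ⟨ν, hν, hac, hpos, rfl⟩ := hr
  have h0 : 0 ≤ KL2 (push ν K) (push μ K) :=
    KL2_nonneg (push_isPMF hν hK) (push_isPMF hμ hK)
      (push_absCont hν.1 hμ.1 (fun x y => (hK x).1 y) hac)
  positivity

/-- contraction property with constant `M` -/
def Contr {α β : Type*} [Fintype α] [Fintype β] (M : ℝ) (μ : α → ℝ) (K : α → β → ℝ) : Prop :=
  ∀ ν : α → ℝ, IsPMF ν → (∀ x, μ x = 0 → ν x = 0) →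
    KL2 (push ν K) (push μ K) ≤ M * KL2 ν μ

lemma contr_etaAt {μ : α → ℝ} {K : α → β → ℝ} (hμ : IsPMF μ)
    (hK : ∀ x, IsPMF (K x)) : Contr (etaAt μ K) μ K := by
  intro ν hν hac
  by_cases h : 0 < KL2 ν μ
  · have hmem : KL2 (push ν K) (push μ K) / KL2 ν μ ∈ etaSet μ K :=
      ⟨ν, hν, hac, h, rfl⟩
    have hle := le_csSup (etaSet_bddAbove hμ hK) hmem
    rw [etaAt_eq]
    calc KL2 (push ν K) (push μ K)
        = (KL2 (push ν K) (push μ K) / KL2 ν μ) * KL2 ν μ := by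
          rw [div_mul_cancel₀ _ (ne_of_gt h)]
      _ ≤ sSup (etaSet μ K) * KL2 ν μ := mul_le_mul_of_nonneg_right hle h.le
  · have h0 : KL2 ν μ = 0 := le_antisymm (not_lt.mp h) (KL2_nonneg hν hμ hac)
    rw [h0, mul_zero]
    exact (KL2_push_le hμ hν hK hac).trans_eq h0

lemma Contr.mono {μ : α → ℝ} {K : α → β → ℝ} {c M : ℝ} (hμ : IsPMF μ)
    (h : Contr c μ K) (hcM : c ≤ M) : Contr M μ K := fun ν hν hac =>
  (h ν hν hac).trans (mul_le_mul_of_nonneg_right hcM (KL2_nonneg hν hμ hac))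

end Basics

section Chain
variable {A2 B1 B2 : Type*} [Fintype A2] [Fintype B1] [Fintype B2]

lemma contr_scaled {M : ℝ} {μ2 : A2 → ℝ} {W2 : A2 → B2 → ℝ}
    (hC : Contr M μ2 W2) (ρ : A2 → ℝ) (hρ : ∀ a, 0 ≤ ρ a)
    (hac : ∀ a, μ2 a = 0 → ρ a = 0) :
    ∑ y, push ρ W2 y * Real.logb 2 (push ρ W2 y / ((∑ a, ρ a) * push μ2 W2 y)) ≤
      M * ∑ a, ρ a * Real.logb 2 (ρ a / ((∑ a', ρ a') * μ2 a)) := by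
  rcases eq_or_lt_of_le (Finset.sum_nonneg (fun a (_ : a ∈ Finset.univ) => hρ a))
    with h0 | hcpos
  · have hz : ∀ a, ρ a = 0 := fun a =>
      (Finset.sum_eq_zero_iff_of_nonneg (fun a _ => hρ a)).mp h0.symm a (Finset.mem_univ a)
    have hpz : ∀ y, push ρ W2 y = 0 := fun y =>
      Finset.sum_eq_zero fun a _ => by rw [hz a, zero_mul]
    simp [hpz, hz]
  · set c := ∑ a, ρ a with hc
    have hcne : c ≠ 0 := ne_of_gt hcpos
    set ν := fun a => ρ a / c with hν
    have hνPMF : IsPMF ν := by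
      refine ⟨fun a => div_nonneg (hρ a) hcpos.le, ?_⟩
      rw [hν, ← Finset.sum_div, ← hc, div_self hcne]
    have hνac : ∀ a, μ2 a = 0 → ν a = 0 := fun a h => by
      simp [hν, hac a h]
    have h := hC ν hνPMF hνac
    have hpush : ∀ y, push ν W2 y = push ρ W2 y / c := by
      intro y
      unfold push
      rw [Finset.sum_div]
      exact Finset.sum_congr rfl fun a _ => by rw [hν]; ring
    have hL : ∑ y, push ρ W2 y * Real.logb 2 (push ρ W2 y / (c * push μ2 W2 y)) =
        c * KL2 (push ν W2) (push μ2 W2) := by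
      unfold KL2
      rw [Finset.mul_sum]
      refine Finset.sum_congr rfl fun y _ => ?_
      rw [hpush y, div_div]
      field_simp
    have hR : ∑ a, ρ a * Real.logb 2 (ρ a / (c * μ2 a)) = c * KL2 ν μ2 := by
      unfold KL2
      rw [Finset.mul_sum]
      refine Finset.sum_congr rfl fun a _ => ?_
      rw [hν]
      simp only
      rw [div_div]
      field_simp
    rw [hL, hR]
    calc c * KL2 (push ν W2) (push μ2 W2) ≤ c * (M * KL2 ν μ2) :=
          mul_le_mul_of_nonneg_left h hcpos.le
      _ = M * (c * KL2 ν μ2) := by ring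

/-- chain-rule splitting of a KL-type sum on a product space -/
lemma kl_split (p : B1 × B2 → ℝ) (q1 : B1 → ℝ) (q2 : B2 → ℝ)
    (hp : ∀ z, 0 ≤ p z) (hq1 : ∀ y, 0 ≤ q1 y) (hq2 : ∀ y, 0 ≤ q2 y)
    (h1 : ∀ z, p z ≠ 0 → q1 z.1 ≠ 0) (h2 : ∀ z, p z ≠ 0 → q2 z.2 ≠ 0) :
    ∑ z : B1 × B2, p z * Real.logb 2 (p z / (q1 z.1 * q2 z.2)) =
      (∑ y1, (∑ y2, p (y1, y2)) * Real.logb 2 ((∑ y2, p (y1, y2)) / q1 y1)) +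
        ∑ z : B1 × B2, p z * Real.logb 2 (p z / ((∑ y2, p (z.1, y2)) * q2 z.2)) := by
  have hmid : (∑ y1, (∑ y2, p (y1, y2)) * Real.logb 2 ((∑ y2, p (y1, y2)) / q1 y1)) =
      ∑ z : B1 × B2, p z * Real.logb 2 ((∑ y2, p (z.1, y2)) / q1 z.1) := by
    rw [Fintype.sum_prod_type]
    refine Finset.sum_congr rfl fun y1 _ => ?_
    rw [Finset.sum_mul]
  rw [hmid, ← Finset.sum_add_distrib]
  refine Finset.sum_congr rfl fun z _ => ?_
  by_cases hz : p z = 0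
  · simp [hz]
  · have hpz : 0 < p z := lt_of_le_of_ne (hp z) (Ne.symm hz)
    have hP1 : 0 < ∑ y2, p (z.1, y2) := by
      have hle : p (z.1, z.2) ≤ ∑ y2, p (z.1, y2) :=
        Finset.single_le_sum (fun y2 _ => hp (z.1, y2)) (Finset.mem_univ z.2)
      calc (0:ℝ) < p z := hpz
        _ = p (z.1, z.2) := by rw [Prod.mk.eta]
        _ ≤ _ := hle
    have hq1z : 0 < q1 z.1 := lt_of_le_of_ne (hq1 z.1) (Ne.symm (h1 z hz))
    have hq2z : 0 < q2 z.2 := lt_of_le_of_ne (hq2 z.2) (Ne.symm (h2 z hz))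
    have harg : p z / (q1 z.1 * q2 z.2) =
        ((∑ y2, p (z.1, y2)) / q1 z.1) * (p z / ((∑ y2, p (z.1, y2)) * q2 z.2)) := by
      field_simp
    rw [harg, Real.logb_mul (by positivity) (by positivity), mul_add]
end Chain

section Pair
set_option maxHeartbeats 1000000
variable {A1 A2 B1 B2 : Type*} [Fintype A1] [Fintype A2] [Fintype B1] [Fintype B2]

lemma contr_pair {M : ℝ} (hM : 0 ≤ M)
    {μ1 : A1 → ℝ} {μ2 : A2 → ℝ} (hμ1 : IsPMF μ1) (hμ2 : IsPMF μ2)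
    {W1 : A1 → B1 → ℝ} {W2 : A2 → B2 → ℝ}
    (hW1 : ∀ x, IsPMF (W1 x)) (hW2 : ∀ x, IsPMF (W2 x))
    (h1 : Contr M μ1 W1) (h2 : Contr M μ2 W2) :
    Contr M (fun a : A1 × A2 => μ1 a.1 * μ2 a.2)
      (fun (a : A1 × A2) (b : B1 × B2) => W1 a.1 b.1 * W2 a.2 b.2) := by
  intro ν hν hac
  have hν0 := hν.1
  set ν1 : A1 → ℝ := fun a1 => ∑ a2, ν (a1, a2) with hν1def
  have hνle : ∀ a1 a2, ν (a1, a2) ≤ ν1 a1 := fun a1 a2 =>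
    Finset.single_le_sum (fun a2' _ => hν0 (a1, a2')) (Finset.mem_univ a2)
  have hν1nonneg : ∀ a1, 0 ≤ ν1 a1 := fun a1 => Finset.sum_nonneg fun a2 _ => hν0 _
  have hν1 : IsPMF ν1 := by
    refine ⟨hν1nonneg, ?_⟩
    show (∑ a1, ∑ a2, ν (a1, a2)) = 1
    rw [← Fintype.sum_prod_type]
    exact hν.2
  have hacp : ∀ z : A1 × A2, ν z ≠ 0 → μ1 z.1 ≠ 0 ∧ μ2 z.2 ≠ 0 := by
    intro z hz
    constructor
    · intro h; exact hz (hac z (by show μ1 z.1 * μ2 z.2 = 0; rw [h, zero_mul]))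
    · intro h; exact hz (hac z (by show μ1 z.1 * μ2 z.2 = 0; rw [h, mul_zero]))
  have hac1 : ∀ a1, μ1 a1 = 0 → ν1 a1 = 0 := by
    intro a1 h
    show (∑ a2, ν (a1, a2)) = 0
    exact Finset.sum_eq_zero fun a2 _ => hac (a1, a2)
      (by show μ1 a1 * μ2 a2 = 0; rw [h, zero_mul])
  have hac2 : ∀ a1 a2, μ2 a2 = 0 → ν (a1, a2) = 0 := fun a1 a2 h =>
    hac _ (by show μ1 a1 * μ2 a2 = 0; rw [h, mul_zero])
  have hacν1 : ∀ a1 a2, ν1 a1 = 0 → ν (a1, a2) = 0 := fun a1 a2 h =>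
    le_antisymm (h ▸ hνle a1 a2) (hν0 _)
  set K : A1 × A2 → B1 × B2 → ℝ := fun a b => W1 a.1 b.1 * W2 a.2 b.2 with hKdef
  set P : B1 × B2 → ℝ := push ν K with hPdef
  set q1 : B1 → ℝ := push μ1 W1 with hq1def
  set q2 : B2 → ℝ := push μ2 W2 with hq2def
  have hKnn : ∀ (a : A1 × A2) (b : B1 × B2), 0 ≤ K a b := fun a b =>
    mul_nonneg ((hW1 a.1).1 b.1) ((hW2 a.2).1 b.2)
  have hPnn : ∀ y, 0 ≤ P y := push_nonneg hν0 hKnn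
  have hq1nn : ∀ y, 0 ≤ q1 y := push_nonneg hμ1.1 (fun x y => (hW1 x).1 y)
  have hq2nn : ∀ y, 0 ≤ q2 y := push_nonneg hμ2.1 (fun x y => (hW2 x).1 y)
  have hI1 : ∀ y1, (∑ y2, P (y1, y2)) = push ν1 W1 y1 := by
    intro y1
    show (∑ y2, ∑ z : A1 × A2, ν z * (W1 z.1 y1 * W2 z.2 y2)) = _
    rw [Finset.sum_comm]
    calc ∑ z : A1 × A2, ∑ y2, ν z * (W1 z.1 y1 * W2 z.2 y2)
        = ∑ z : A1 × A2, ν z * W1 z.1 y1 := by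
          refine Finset.sum_congr rfl fun z _ => ?_
          calc (∑ y2, ν z * (W1 z.1 y1 * W2 z.2 y2))
              = (ν z * W1 z.1 y1) * ∑ y2, W2 z.2 y2 := by
                rw [Finset.mul_sum]
                exact Finset.sum_congr rfl fun y2 _ => by ring
            _ = ν z * W1 z.1 y1 := by rw [(hW2 z.2).2, mul_one]
      _ = ∑ a1, ∑ a2, ν (a1, a2) * W1 a1 y1 := Fintype.sum_prod_type _
      _ = ∑ a1, ν1 a1 * W1 a1 y1 := by
          exact Finset.sum_congr rfl fun a1 _ => by rw [← Finset.sum_mul]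
      _ = push ν1 W1 y1 := rfl
  have hQ : ∀ y : B1 × B2, push (fun a : A1 × A2 => μ1 a.1 * μ2 a.2) K y =
      q1 y.1 * q2 y.2 := by
    intro y
    show (∑ z : A1 × A2, (μ1 z.1 * μ2 z.2) * (W1 z.1 y.1 * W2 z.2 y.2)) = _
    rw [Fintype.sum_prod_type]
    calc ∑ a1, ∑ a2, (μ1 a1 * μ2 a2) * (W1 a1 y.1 * W2 a2 y.2)
        = ∑ a1, (μ1 a1 * W1 a1 y.1) * ∑ a2, μ2 a2 * W2 a2 y.2 := by
          refine Finset.sum_congr rfl fun a1 _ => ?_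
          rw [Finset.mul_sum]
          exact Finset.sum_congr rfl fun a2 _ => by ring
      _ = (∑ a1, μ1 a1 * W1 a1 y.1) * ∑ a2, μ2 a2 * W2 a2 y.2 := by
          rw [Finset.sum_mul]
      _ = q1 y.1 * q2 y.2 := rfl
  have hPq1 : ∀ z : B1 × B2, P z ≠ 0 → q1 z.1 ≠ 0 := by
    intro z hz h
    apply hz
    have hz1 : ∀ a1, μ1 a1 * W1 a1 z.1 = 0 := fun a1 =>
      (Finset.sum_eq_zero_iff_of_nonneg
        (fun a1 _ => mul_nonneg (hμ1.1 a1) ((hW1 a1).1 z.1))).mp h a1 (Finset.mem_univ a1)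
    show (∑ w : A1 × A2, ν w * (W1 w.1 z.1 * W2 w.2 z.2)) = 0
    refine Finset.sum_eq_zero fun w _ => ?_
    by_cases hw : ν w = 0
    · rw [hw, zero_mul]
    · have hW1w : W1 w.1 z.1 = 0 := by
        rcases mul_eq_zero.mp (hz1 w.1) with h' | h'
        · exact absurd h' (hacp w hw).1
        · exact h'
      rw [hW1w, zero_mul, mul_zero]
  have hPq2 : ∀ z : B1 × B2, P z ≠ 0 → q2 z.2 ≠ 0 := by
    intro z hz h
    apply hz
    have hz2 : ∀ a2, μ2 a2 * W2 a2 z.2 = 0 := fun a2 =>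
      (Finset.sum_eq_zero_iff_of_nonneg
        (fun a2 _ => mul_nonneg (hμ2.1 a2) ((hW2 a2).1 z.2))).mp h a2 (Finset.mem_univ a2)
    show (∑ w : A1 × A2, ν w * (W1 w.1 z.1 * W2 w.2 z.2)) = 0
    refine Finset.sum_eq_zero fun w _ => ?_
    by_cases hw : ν w = 0
    · rw [hw, zero_mul]
    · have hW2w : W2 w.2 z.2 = 0 := by
        rcases mul_eq_zero.mp (hz2 w.2) with h' | h'
        · exact absurd h' (hacp w hw).2
        · exact h'
      rw [hW2w, mul_zero, mul_zero]
  have hKL : KL2 (push ν K) (push (fun a : A1 × A2 => μ1 a.1 * μ2 a.2) K) =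
      ∑ z : B1 × B2, P z * Real.logb 2 (P z / (q1 z.1 * q2 z.2)) := by
    unfold KL2
    exact Finset.sum_congr rfl fun z _ => by rw [hQ z]
  -- Step B
  have hB : (∑ y1, (∑ y2, P (y1, y2)) * Real.logb 2 ((∑ y2, P (y1, y2)) / q1 y1)) =
      KL2 (push ν1 W1) (push μ1 W1) := by
    unfold KL2
    exact Finset.sum_congr rfl fun y1 _ => by rw [hI1 y1]
  have hBle : KL2 (push ν1 W1) (push μ1 W1) ≤ M * KL2 ν1 μ1 := h1 ν1 hν1 hac1
  -- Step C
  set m : B1 → A2 → ℝ := fun y1 a2 => ∑ a1, ν (a1, a2) * W1 a1 y1 with hmdef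
  have hmnn : ∀ y1 a2, 0 ≤ m y1 a2 := fun y1 a2 =>
    Finset.sum_nonneg fun a1 _ => mul_nonneg (hν0 _) ((hW1 a1).1 y1)
  have hmac : ∀ y1 a2, μ2 a2 = 0 → m y1 a2 = 0 := fun y1 a2 h =>
    Finset.sum_eq_zero fun a1 _ => by rw [hac2 a1 a2 h, zero_mul]
  have hmsum : ∀ y1, (∑ a2, m y1 a2) = ∑ y2, P (y1, y2) := by
    intro y1
    rw [hI1 y1]
    show (∑ a2, ∑ a1, ν (a1, a2) * W1 a1 y1) = ∑ a1, ν1 a1 * W1 a1 y1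
    rw [Finset.sum_comm]
    exact Finset.sum_congr rfl fun a1 _ => by rw [← Finset.sum_mul]
  have hmpush : ∀ y1 y2, push (m y1) W2 y2 = P (y1, y2) := by
    intro y1 y2
    show (∑ a2, (∑ a1, ν (a1, a2) * W1 a1 y1) * W2 a2 y2) =
      ∑ z : A1 × A2, ν z * (W1 z.1 y1 * W2 z.2 y2)
    calc (∑ a2, (∑ a1, ν (a1, a2) * W1 a1 y1) * W2 a2 y2)
        = ∑ a2, ∑ a1, ν (a1, a2) * (W1 a1 y1 * W2 a2 y2) := by
          refine Finset.sum_congr rfl fun a2 _ => ?_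
          rw [Finset.sum_mul]
          exact Finset.sum_congr rfl fun a1 _ => by ring
      _ = ∑ a1, ∑ a2, ν (a1, a2) * (W1 a1 y1 * W2 a2 y2) := Finset.sum_comm
      _ = ∑ z : A1 × A2, ν z * (W1 z.1 y1 * W2 z.2 y2) := by
          rw [Fintype.sum_prod_type]
  have hCle : (∑ z : B1 × B2, P z * Real.logb 2 (P z / ((∑ y2, P (z.1, y2)) * q2 z.2))) ≤
      M * ∑ y1, ∑ a2, m y1 a2 * Real.logb 2 (m y1 a2 / ((∑ y2, P (y1, y2)) * μ2 a2)) := by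
    rw [Fintype.sum_prod_type, Finset.mul_sum]
    refine Finset.sum_le_sum fun y1 _ => ?_
    have hsc := contr_scaled h2 (m y1) (hmnn y1) (fun a2 h => hmac y1 a2 h)
    rw [hmsum y1] at hsc
    simp only [hmpush] at hsc
    exact hsc
  -- Step D
  set S := ∑ z : A1 × A2, ν z * Real.logb 2 (ν z / (ν1 z.1 * μ2 z.2)) with hSdef
  have hU : (∑ y1, ∑ a2, m y1 a2 * Real.logb 2 (m y1 a2 / ((∑ y2, P (y1, y2)) * μ2 a2))) ≤
      S := by
    have hper : ∀ y1 a2, m y1 a2 * Real.logb 2 (m y1 a2 / ((∑ y2, P (y1, y2)) * μ2 a2)) ≤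
        ∑ a1, (ν (a1, a2) * W1 a1 y1) * Real.logb 2 (ν (a1, a2) / (ν1 a1 * μ2 a2)) := by
      intro y1 a2
      have hbsum : (∑ a1, ν1 a1 * W1 a1 y1 * μ2 a2) = (∑ y2, P (y1, y2)) * μ2 a2 := by
        rw [hI1 y1]
        show _ = (∑ a1, ν1 a1 * W1 a1 y1) * μ2 a2
        rw [Finset.sum_mul]
      have hls := logbsum_aux Finset.univ (fun a1 => ν (a1, a2) * W1 a1 y1)
          (fun a1 => ν1 a1 * W1 a1 y1 * μ2 a2)
          (fun a1 _ => mul_nonneg (hν0 _) ((hW1 a1).1 y1))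
          (fun a1 _ => mul_nonneg (mul_nonneg (hν1nonneg a1) ((hW1 a1).1 y1)) (hμ2.1 a2))
          (fun a1 _ h => by
            rcases mul_eq_zero.mp h with h' | h'
            · rcases mul_eq_zero.mp h' with h'' | h''
              · simp [hacν1 a1 a2 h'']
              · simp [h'']
            · simp [hac2 a1 a2 h'])
      rw [hbsum] at hls
      have hls' : (∑ a1, ν (a1, a2) * W1 a1 y1) *
            Real.logb 2 ((∑ a1, ν (a1, a2) * W1 a1 y1) / ((∑ y2, P (y1, y2)) * μ2 a2)) ≤
          ∑ a1, (ν (a1, a2) * W1 a1 y1) *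
            Real.logb 2 ((ν (a1, a2) * W1 a1 y1) / (ν1 a1 * W1 a1 y1 * μ2 a2)) := hls
      refine hls'.trans (le_of_eq (Finset.sum_congr rfl fun a1 _ => ?_))
      by_cases hz : ν (a1, a2) * W1 a1 y1 = 0
      · rw [hz, zero_mul, zero_mul]
      · have hW1ne : W1 a1 y1 ≠ 0 := fun h => hz (by rw [h, mul_zero])
        rw [show ν1 a1 * W1 a1 y1 * μ2 a2 = (ν1 a1 * μ2 a2) * W1 a1 y1 by ring,
          mul_div_mul_right _ _ hW1ne]
    calc (∑ y1, ∑ a2, m y1 a2 * Real.logb 2 (m y1 a2 / ((∑ y2, P (y1, y2)) * μ2 a2)))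
        ≤ ∑ y1, ∑ a2, ∑ a1,
            (ν (a1, a2) * W1 a1 y1) * Real.logb 2 (ν (a1, a2) / (ν1 a1 * μ2 a2)) :=
          Finset.sum_le_sum fun y1 _ => Finset.sum_le_sum fun a2 _ => hper y1 a2
      _ = ∑ a2, ∑ a1, ∑ y1,
            (ν (a1, a2) * W1 a1 y1) * Real.logb 2 (ν (a1, a2) / (ν1 a1 * μ2 a2)) := by
          rw [Finset.sum_comm]
          exact Finset.sum_congr rfl fun a2 _ => Finset.sum_comm
      _ = ∑ a2, ∑ a1, ν (a1, a2) * Real.logb 2 (ν (a1, a2) / (ν1 a1 * μ2 a2)) := by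
          refine Finset.sum_congr rfl fun a2 _ => Finset.sum_congr rfl fun a1 _ => ?_
          calc (∑ y1, (ν (a1, a2) * W1 a1 y1) * Real.logb 2 (ν (a1, a2) / (ν1 a1 * μ2 a2)))
              = (ν (a1, a2) * Real.logb 2 (ν (a1, a2) / (ν1 a1 * μ2 a2))) * ∑ y1, W1 a1 y1 := by
                rw [Finset.mul_sum]
                exact Finset.sum_congr rfl fun y1 _ => by ring
            _ = _ := by rw [(hW1 a1).2, mul_one]
      _ = S := by
          rw [hSdef, Fintype.sum_prod_type]
          exact Finset.sum_comm
  -- Step E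
  have hE : KL2 ν (fun a : A1 × A2 => μ1 a.1 * μ2 a.2) = KL2 ν1 μ1 + S :=
    kl_split ν μ1 μ2 hν0 hμ1.1 hμ2.1 (fun z hz => (hacp z hz).1) (fun z hz => (hacp z hz).2)
  -- Step F
  have hν1μ2PMF : IsPMF (fun z : A1 × A2 => ν1 z.1 * μ2 z.2) := by
    refine ⟨fun z => mul_nonneg (hν1nonneg z.1) (hμ2.1 z.2), ?_⟩
    rw [Fintype.sum_prod_type]
    calc ∑ a1, ∑ a2, ν1 a1 * μ2 a2 = ∑ a1, ν1 a1 * ∑ a2, μ2 a2 := by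
          exact Finset.sum_congr rfl fun a1 _ => (Finset.mul_sum _ _ _).symm
      _ = 1 := by rw [hμ2.2]; simp only [mul_one]; exact hν1.2
  have hSnn : 0 ≤ S :=
    KL2_nonneg hν hν1μ2PMF (fun z h => by
      rcases mul_eq_zero.mp h with h' | h'
      · exact hacν1 z.1 z.2 h'
      · exact hac2 z.1 z.2 h')
  -- assemble
  calc KL2 (push ν K) (push (fun a : A1 × A2 => μ1 a.1 * μ2 a.2) K)
      = (∑ y1, (∑ y2, P (y1, y2)) * Real.logb 2 ((∑ y2, P (y1, y2)) / q1 y1)) +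
          ∑ z : B1 × B2, P z * Real.logb 2 (P z / ((∑ y2, P (z.1, y2)) * q2 z.2)) := by
        rw [hKL]
        exact kl_split P q1 q2 hPnn hq1nn hq2nn hPq1 hPq2
    _ ≤ M * KL2 ν1 μ1 + M * S := by
        refine add_le_add ?_ (hCle.trans (mul_le_mul_of_nonneg_left hU hM))
        rw [hB]
        exact hBle
    _ = M * (KL2 ν1 μ1 + S) := by ring
    _ = M * KL2 ν (fun a : A1 × A2 => μ1 a.1 * μ2 a.2) := by rw [hE]

end Pair

section Transport
universe u v

lemma KL2_equiv {α α' : Type*} [Fintype α] [Fintype α'] (e : α ≃ α') (p q : α' → ℝ) :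
    KL2 (fun x => p (e x)) (fun x => q (e x)) = KL2 p q :=
  Fintype.sum_equiv e _ _ (fun _ => rfl)

lemma Contr.equiv {A B A' B' : Type*} [Fintype A] [Fintype B] [Fintype A'] [Fintype B']
    {M : ℝ} {μ : A → ℝ} {K : A → B → ℝ} (e : A' ≃ A) (f : B' ≃ B)
    (h : Contr M μ K) :
    Contr M (fun x => μ (e x)) (fun x y => K (e x) (f y)) := by
  intro ν' hν' hac'
  set ν : A → ℝ := fun x => ν' (e.symm x) with hνdef
  have hν : IsPMF ν := by
    refine ⟨fun x => hν'.1 _, ?_⟩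
    exact (Fintype.sum_equiv e.symm _ _ (fun _ => rfl)).trans hν'.2
  have hacν : ∀ x, μ x = 0 → ν x = 0 := fun x h' =>
    hac' (e.symm x) (by show μ (e (e.symm x)) = 0; rw [Equiv.apply_symm_apply]; exact h')
  have h0 := h ν hν hacν
  have hp1 : ∀ y', push ν' (fun x y => K (e x) (f y)) y' = push ν K (f y') := by
    intro y'
    exact Fintype.sum_equiv e (fun x' => ν' x' * K (e x') (f y'))
      (fun x => ν x * K x (f y')) (fun x' => by rw [hνdef]; simp)
  have hp2 : ∀ y', push (fun x => μ (e x)) (fun x y => K (e x) (f y)) y' = push μ K (f y') :=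
    fun y' => Fintype.sum_equiv e _ _ (fun _ => rfl)
  have hνeq : ν' = fun x' => ν (e x') := funext fun x' => by rw [hνdef]; simp
  calc KL2 (push ν' (fun x y => K (e x) (f y)))
        (push (fun x => μ (e x)) (fun x y => K (e x) (f y)))
      = KL2 (push ν K) (push μ K) := by
        rw [← KL2_equiv f (push ν K) (push μ K)]
        unfold KL2
        exact Finset.sum_congr rfl fun y' _ => by rw [hp1, hp2]
    _ ≤ M * KL2 ν μ := h0
    _ = M * KL2 ν' (fun x => μ (e x)) := by rw [hνeq, KL2_equiv e ν μ]

lemma isPMF_pi {ι : Type*} [Fintype ι] [DecidableEq ι] {α : ι → Type*}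
    [∀ i, Fintype (α i)] {p : ∀ i, α i → ℝ} (hp : ∀ i, IsPMF (p i)) :
    IsPMF (fun x : ∀ i, α i => ∏ i, p i (x i)) := by
  refine ⟨fun x => Finset.prod_nonneg fun i _ => (hp i).1 _, ?_⟩
  rw [← Fintype.prod_sum]
  calc ∏ i, ∑ a, p i a = ∏ _i, (1:ℝ) := Finset.prod_congr rfl fun i _ => (hp i).2
    _ = 1 := Finset.prod_const_one

lemma push_pi {ι : Type*} [Fintype ι] [DecidableEq ι] {α β : ι → Type*}
    [∀ i, Fintype (α i)] [∀ i, Fintype (β i)]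
    (p : ∀ i, α i → ℝ) (K : ∀ i, α i → β i → ℝ) :
    push (fun x : ∀ i, α i => ∏ i, p i (x i))
      (fun (x : ∀ i, α i) (y : ∀ i, β i) => ∏ i, K i (x i) (y i)) =
      fun y => ∏ i, push (p i) (K i) (y i) := by
  funext y
  show (∑ x : ∀ i, α i, (∏ i, p i (x i)) * ∏ i, K i (x i) (y i)) = _
  calc (∑ x : ∀ i, α i, (∏ i, p i (x i)) * ∏ i, K i (x i) (y i))
      = ∑ x : ∀ i, α i, ∏ i, (p i (x i) * K i (x i) (y i)) :=
        Finset.sum_congr rfl fun x _ => (Finset.prod_mul_distrib).symm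
    _ = ∏ i, ∑ a, p i a * K i a (y i) := by rw [Fintype.prod_sum]
    _ = ∏ i, push (p i) (K i) (y i) := rfl

lemma KL2_pair {A1 A2 : Type*} [Fintype A1] [Fintype A2]
    {p1 q1 : A1 → ℝ} {p2 q2 : A2 → ℝ} (hp1 : IsPMF p1) (hp2 : IsPMF p2)
    (hac1 : ∀ a, q1 a = 0 → p1 a = 0) (hac2 : ∀ a, q2 a = 0 → p2 a = 0) :
    KL2 (fun z : A1 × A2 => p1 z.1 * p2 z.2) (fun z => q1 z.1 * q2 z.2) =
      KL2 p1 q1 + KL2 p2 q2 := by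
  have hterm : ∀ z : A1 × A2,
      (p1 z.1 * p2 z.2) * Real.logb 2 ((p1 z.1 * p2 z.2) / (q1 z.1 * q2 z.2)) =
      (p1 z.1 * p2 z.2) * Real.logb 2 (p1 z.1 / q1 z.1) +
        (p1 z.1 * p2 z.2) * Real.logb 2 (p2 z.2 / q2 z.2) := by
    intro z
    by_cases h1 : p1 z.1 = 0
    · simp [h1]
    by_cases h2 : p2 z.2 = 0
    · simp [h2]
    have hq1 : q1 z.1 ≠ 0 := fun h => h1 (hac1 _ h)
    have hq2 : q2 z.2 ≠ 0 := fun h => h2 (hac2 _ h)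
    rw [← div_mul_div_comm, Real.logb_mul (div_ne_zero h1 hq1) (div_ne_zero h2 hq2), mul_add]
  show (∑ z : A1 × A2, (p1 z.1 * p2 z.2) * Real.logb 2 ((p1 z.1 * p2 z.2) / (q1 z.1 * q2 z.2)))
    = KL2 p1 q1 + KL2 p2 q2
  calc (∑ z : A1 × A2, (p1 z.1 * p2 z.2) * Real.logb 2 ((p1 z.1 * p2 z.2) / (q1 z.1 * q2 z.2)))
      = ∑ z : A1 × A2, ((p1 z.1 * p2 z.2) * Real.logb 2 (p1 z.1 / q1 z.1) +
          (p1 z.1 * p2 z.2) * Real.logb 2 (p2 z.2 / q2 z.2)) :=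
        Finset.sum_congr rfl fun z _ => hterm z
    _ = KL2 p1 q1 + KL2 p2 q2 := by
      rw [Finset.sum_add_distrib]
      congr 1
      · rw [Fintype.sum_prod_type]
        calc ∑ a1, ∑ a2, (p1 a1 * p2 a2) * Real.logb 2 (p1 a1 / q1 a1)
            = ∑ a1, (p1 a1 * Real.logb 2 (p1 a1 / q1 a1)) * ∑ a2, p2 a2 := by
              refine Finset.sum_congr rfl fun a1 _ => ?_
              rw [Finset.mul_sum]
              exact Finset.sum_congr rfl fun a2 _ => by ring
          _ = KL2 p1 q1 := by rw [hp2.2]; simp only [mul_one]; rfl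
      · rw [Fintype.sum_prod_type_right]
        calc ∑ a2, ∑ a1, (p1 a1 * p2 a2) * Real.logb 2 (p2 a2 / q2 a2)
            = ∑ a2, (p2 a2 * Real.logb 2 (p2 a2 / q2 a2)) * ∑ a1, p1 a1 := by
              refine Finset.sum_congr rfl fun a2 _ => ?_
              rw [Finset.mul_sum]
              exact Finset.sum_congr rfl fun a1 _ => by ring
          _ = KL2 p2 q2 := by rw [hp1.2]; simp only [mul_one]; rfl

lemma KL2_pi : ∀ (n : ℕ) {α : Fin n → Type u} [∀ i, Fintype (α i)]
    (p q : ∀ i, α i → ℝ), (∀ i, IsPMF (p i)) → (∀ i, IsPMF (q i)) →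
    (∀ i x, q i x = 0 → p i x = 0) →
    KL2 (fun x : ∀ i, α i => ∏ i, p i (x i)) (fun x => ∏ i, q i (x i)) =
      ∑ i, KL2 (p i) (q i) := by
  intro n
  induction n with
  | zero =>
    intro α _ p q hp hq hac
    have h1 : (fun x : ∀ i, α i => ∏ i, p i (x i)) = fun _ => (1:ℝ) :=
      funext fun x => by simp
    have h2 : (fun x : ∀ i, α i => ∏ i, q i (x i)) = fun _ => (1:ℝ) :=
      funext fun x => by simp
    rw [h1, h2]
    simp [KL2_self]
  | succ n ih =>
    intro α instα p q hp hq hac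
    have he := KL2_equiv (Fin.consEquiv α) (fun x : ∀ i, α i => ∏ i, p i (x i))
      (fun x => ∏ i, q i (x i))
    rw [← he]
    have hp' : (fun z : α 0 × (∀ i : Fin n, α i.succ) =>
        (fun x : ∀ i, α i => ∏ i, p i (x i)) ((Fin.consEquiv α) z)) =
        fun z => p 0 z.1 * ∏ i : Fin n, p i.succ (z.2 i) := by
      funext z
      simp [Fin.prod_univ_succ]
    have hq' : (fun z : α 0 × (∀ i : Fin n, α i.succ) =>
        (fun x : ∀ i, α i => ∏ i, q i (x i)) ((Fin.consEquiv α) z)) =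
        fun z => q 0 z.1 * ∏ i : Fin n, q i.succ (z.2 i) := by
      funext z
      simp [Fin.prod_univ_succ]
    rw [hp', hq']
    have hacPi : ∀ x2 : ∀ i : Fin n, α i.succ,
        (∏ i, q i.succ (x2 i)) = 0 → (∏ i, p i.succ (x2 i)) = 0 := by
      intro x2 h
      obtain ⟨i, _, hi⟩ := Finset.prod_eq_zero_iff.mp h
      exact Finset.prod_eq_zero (Finset.mem_univ i) (hac _ _ hi)
    rw [KL2_pair (hp 0) (isPMF_pi (fun i => hp i.succ)) (fun a h => hac 0 a h) hacPi]
    rw [ih (fun i => p i.succ) (fun i => q i.succ) (fun i => hp i.succ)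
      (fun i => hq i.succ) (fun i x => hac i.succ x)]
    rw [Fin.sum_univ_succ]

lemma contr_pi {M : ℝ} (hM : 0 ≤ M) :
    ∀ (n : ℕ) {α : Fin n → Type u} {β : Fin n → Type v}
    [∀ i, Fintype (α i)] [∀ i, Fintype (β i)]
    (μ : ∀ i, α i → ℝ) (K : ∀ i, α i → β i → ℝ),
    (∀ i, IsPMF (μ i)) → (∀ i x, IsPMF (K i x)) → (∀ i, Contr M (μ i) (K i)) →
    Contr M (fun x : ∀ i, α i => ∏ i, μ i (x i))
      (fun (x : ∀ i, α i) (y : ∀ i, β i) => ∏ i, K i (x i) (y i)) := by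
  intro n
  induction n with
  | zero =>
    intro α β _ _ μ K hμ hK hC ν hν hacν
    have hμprod : (fun x : ∀ i, α i => ∏ i, μ i (x i)) = fun _ => (1:ℝ) :=
      funext fun x => by simp
    have hνeq : ν = fun _ => (1:ℝ) := by
      funext x
      have h1 : ∑ x' : ∀ i, α i, ν x' = 1 := hν.2
      rw [Fintype.sum_unique] at h1
      rw [Subsingleton.elim x default, h1]
    rw [hνeq, hμprod, KL2_self, KL2_self, mul_zero]
  | succ n ih =>
    intro α β instα instβ μ K hμ hK hC
    have hpair := contr_pair hM (hμ 0) (isPMF_pi (fun i => hμ i.succ)) (hK 0)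
      (fun x : ∀ i : Fin n, α i.succ =>
        isPMF_pi (fun i => hK i.succ (x i)))
      (hC 0)
      (ih (fun i => μ i.succ) (fun i => K i.succ) (fun i => hμ i.succ)
        (fun i x => hK i.succ x) (fun i => hC i.succ))
    have htrans := hpair.equiv (Fin.consEquiv α).symm (Fin.consEquiv β).symm
    have hμeq : (fun x : ∀ i : Fin (n+1), α i => ∏ i, μ i (x i)) =
        fun x => μ 0 (((Fin.consEquiv α).symm x).1) *
          ∏ i : Fin n, μ i.succ (((Fin.consEquiv α).symm x).2 i) := by
      funext x
      rw [Fin.prod_univ_succ]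
      rfl
    have hKeq : (fun (x : ∀ i : Fin (n+1), α i) (y : ∀ i : Fin (n+1), β i) =>
        ∏ i, K i (x i) (y i)) =
        fun x y => K 0 (((Fin.consEquiv α).symm x).1) (((Fin.consEquiv β).symm y).1) *
          ∏ i : Fin n, K i.succ (((Fin.consEquiv α).symm x).2 i)
            (((Fin.consEquiv β).symm y).2 i) := by
      funext x y
      rw [Fin.prod_univ_succ]
      rfl
    rw [hμeq, hKeq]
    exact htrans

end Transport


set_option maxHeartbeats 1000000 in
/-- tensorization of the SDPI constant:
η(μ₁⊗⋯⊗μ_n, K₁⊗⋯⊗K_n) = max_i η(μ_i, K_i). -/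
theorem sdpi_tensorization
    {n : ℕ} (hn : 0 < n)
    {α β : Fin n → Type*} [∀ i, Fintype (α i)] [∀ i, Fintype (β i)]
    (μ : ∀ i, α i → ℝ) (hμ : ∀ i, IsPMF (μ i))
    (K : ∀ i, α i → β i → ℝ) (hK : ∀ i x, IsPMF (K i x)) :
    etaAt (fun x : ∀ i, α i => ∏ i, μ i (x i))
          (fun (x : ∀ i, α i) (y : ∀ i, β i) => ∏ i, K i (x i) (y i)) =
      Finset.univ.sup' (Finset.univ_nonempty_iff.mpr ⟨⟨0, hn⟩⟩)
        (fun i => etaAt (μ i) (K i)) := by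
  classical
  set M := Finset.univ.sup' (Finset.univ_nonempty_iff.mpr ⟨⟨0, hn⟩⟩)
    (fun i => etaAt (μ i) (K i)) with hMdef
  have hμprod : IsPMF (fun x : ∀ i, α i => ∏ i, μ i (x i)) := isPMF_pi hμ
  have hKprod : ∀ x : ∀ i, α i, IsPMF (fun y : ∀ i, β i => ∏ i, K i (x i) (y i)) :=
    fun x => isPMF_pi (fun i => hK i (x i))
  have hM0 : 0 ≤ M := by
    rw [hMdef]
    exact le_trans (etaAt_nonneg (hμ ⟨0, hn⟩) (hK ⟨0, hn⟩))
      (Finset.le_sup' (fun i => etaAt (μ i) (K i)) (Finset.mem_univ (⟨0, hn⟩ : Fin n)))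
  have hCi : ∀ i, Contr M (μ i) (K i) := by
    intro i
    refine Contr.mono (hμ i) (contr_etaAt (hμ i) (hK i)) ?_
    rw [hMdef]
    exact Finset.le_sup' (fun i => etaAt (μ i) (K i)) (Finset.mem_univ i)
  have hCprod := contr_pi hM0 n μ K hμ hK hCi
  refine le_antisymm ?_ ?_
  · rw [etaAt_eq]
    refine Real.sSup_le ?_ hM0
    rintro r ⟨ν, hν, hac, hpos, rfl⟩
    rw [div_le_iff₀ hpos]
    exact hCprod ν hν hac
  · refine Finset.sup'_le _ _ fun i _ => ?_
    rw [etaAt_eq (μ i) (K i)]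
    refine Real.sSup_le ?_ (etaAt_nonneg hμprod hKprod)
    rintro r ⟨νi, hνi, haci, hpos, rfl⟩
    set f : ∀ j, α j → ℝ := Function.update μ i νi with hfdef
    have hfeq_i : f i = νi := Function.update_self i νi μ
    have hfeq_ne : ∀ j, j ≠ i → f j = μ j := fun j hne => Function.update_of_ne hne νi μ
    have hf : ∀ j, IsPMF (f j) := by
      intro j
      rcases eq_or_ne j i with rfl | hne
      · rw [hfeq_i]; exact hνi
      · rw [hfeq_ne j hne]; exact hμ j
    have hfac : ∀ j x, μ j x = 0 → f j x = 0 := by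
      intro j x h
      rcases eq_or_ne j i with rfl | hne
      · rw [hfeq_i]; exact haci x h
      · rw [hfeq_ne j hne]; exact h
    have hνPMF : IsPMF (fun x : ∀ j, α j => ∏ j, f j (x j)) := isPMF_pi hf
    have hacprod : ∀ x : ∀ j, α j, (∏ j, μ j (x j)) = 0 → (∏ j, f j (x j)) = 0 := by
      intro x h
      obtain ⟨j, _, hj⟩ := Finset.prod_eq_zero_iff.mp h
      exact Finset.prod_eq_zero (Finset.mem_univ j) (hfac j (x j) hj)
    have hKLin : KL2 (fun x : ∀ j, α j => ∏ j, f j (x j)) (fun x => ∏ j, μ j (x j)) =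
        KL2 νi (μ i) := by
      rw [KL2_pi n f μ hf hμ hfac, Finset.sum_eq_single i]
      · rw [hfeq_i]
      · intro j _ hne
        rw [hfeq_ne j hne, KL2_self]
      · intro h; exact absurd (Finset.mem_univ i) h
    have hKLout : KL2
        (push (fun x : ∀ j, α j => ∏ j, f j (x j))
          (fun (x : ∀ j, α j) (y : ∀ j, β j) => ∏ j, K j (x j) (y j)))
        (push (fun x : ∀ j, α j => ∏ j, μ j (x j))
          (fun (x : ∀ j, α j) (y : ∀ j, β j) => ∏ j, K j (x j) (y j))) =
        KL2 (push νi (K i)) (push (μ i) (K i)) := by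
      rw [push_pi f K, push_pi μ K]
      rw [KL2_pi n (fun j => push (f j) (K j)) (fun j => push (μ j) (K j))
        (fun j => push_isPMF (hf j) (hK j)) (fun j => push_isPMF (hμ j) (hK j))
        (fun j => push_absCont (hf j).1 (hμ j).1 (fun x y => (hK j x).1 y) (hfac j))]
      rw [Finset.sum_eq_single i]
      · rw [hfeq_i]
      · intro j _ hne
        rw [hfeq_ne j hne, KL2_self]
      · intro h; exact absurd (Finset.mem_univ i) h
    have hmem : KL2 (push νi (K i)) (push (μ i) (K i)) / KL2 νi (μ i) ∈
        etaSet (fun x : ∀ j, α j => ∏ j, μ j (x j))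
          (fun (x : ∀ j, α j) (y : ∀ j, β j) => ∏ j, K j (x j) (y j)) :=
      ⟨fun x => ∏ j, f j (x j), hνPMF, hacprod,
        by rw [hKLin]; exact hpos, by rw [hKLin, hKLout]⟩
    exact le_csSup (etaSet_bddAbove hμprod hKprod) hmem
end

section
/- If W ∼ Bern(1/2) is transmitted via any encoding over T independent uses of BSC(ε), then any estimator Ŵ from the channel output satisfies 1 − h(P(Ŵ ≠ W)) ≤ 1 − (4ε(1−ε))^T, and hence the minimum blocklength T* needed to achieve error probability at most p satisfies T* ≥ log(1/h(p)) / log(1/(4ε(1−ε))). -/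
open Finset Real

set_option maxHeartbeats 1000000

private lemma hasDerivAt_G (x : ℝ) (hx0 : x ≠ 0) (hx1 : x ≠ 1) :
    HasDerivAt (fun y : ℝ => Real.log (1 - y) - Real.log y - 4 * Real.log 2 * (1 - 2 * y))
      (-(1 - x)⁻¹ - x⁻¹ + 8 * Real.log 2) x := by
  have h1 : HasDerivAt (fun y : ℝ => 1 - y) (-1) x := (hasDerivAt_id x).const_sub 1
  have hlog1m : HasDerivAt (fun y : ℝ => Real.log (1 - y)) ((1 - x)⁻¹ * (-1)) x :=
    (Real.hasDerivAt_log (sub_ne_zero.2 (Ne.symm hx1))).comp x h1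
  have hlog : HasDerivAt Real.log x⁻¹ x := Real.hasDerivAt_log hx0
  have h2 : HasDerivAt (fun y : ℝ => 1 - 2 * y) (-2) x := by
    simpa using ((hasDerivAt_id x).const_mul 2).const_sub 1
  have hpoly : HasDerivAt (fun y : ℝ => 4 * Real.log 2 * (1 - 2 * y))
      (4 * Real.log 2 * (-2)) x := h2.const_mul _
  have := (hlog1m.sub hlog).sub hpoly
  exact this.congr_deriv (by ring)

private lemma hasDerivAt_G' (x : ℝ) (hx0 : x ≠ 0) (hx1 : x ≠ 1) :
    HasDerivAt (fun y : ℝ => -(1 - y)⁻¹ - y⁻¹ + 8 * Real.log 2)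
      ((x⁻¹) ^ 2 - ((1 - x)⁻¹) ^ 2) x := by
  have h1 : HasDerivAt (fun y : ℝ => 1 - y) (-1) x := (hasDerivAt_id x).const_sub 1
  have h1' : HasDerivAt (fun y : ℝ => (1 - y)⁻¹) (-(-1) / (1 - x) ^ 2) x :=
    h1.inv (sub_ne_zero.2 (Ne.symm hx1))
  have h2 : HasDerivAt (fun y : ℝ => y⁻¹) (-1 / x ^ 2) x := (hasDerivAt_id x).inv hx0
  have := (h1'.neg.sub h2).add_const (8 * Real.log 2)
  refine this.congr_deriv ?_
  have hx1' : (1:ℝ) - x ≠ 0 := sub_ne_zero.2 (Ne.symm hx1)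
  field_simp
  ring

private lemma F_nonneg_half (x : ℝ) (hx0 : 0 ≤ x) (hx2 : x ≤ 1 / 2) :
    4 * Real.log 2 * (x * (1 - x)) ≤ Real.binEntropy x := by
  rcases eq_or_lt_of_le hx0 with h | hx0'
  · simp [← h]
  have hx2' : x ≤ (2:ℝ)⁻¹ := by rw [← one_div]; exact hx2
  set G : ℝ → ℝ := fun y => Real.log (1 - y) - Real.log y - 4 * Real.log 2 * (1 - 2 * y) with hG
  set F : ℝ → ℝ := fun y => Real.binEntropy y - 4 * Real.log 2 * (y * (1 - y)) with hFdef
  have hF : ∀ y ∈ Set.Ioo (0:ℝ) 1, HasDerivAt F (G y) y := by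
    intro y hy
    have hpoly : HasDerivAt (fun z : ℝ => 4 * Real.log 2 * (z * (1 - z)))
        (4 * Real.log 2 * (1 - 2 * y)) y := by
      have := ((hasDerivAt_id y).mul ((hasDerivAt_id y).const_sub 1)).const_mul
        (4 * Real.log 2)
      refine this.congr_deriv ?_
      simp only [id_eq]
      ring
    have := (Real.hasDerivAt_binEntropy hy.1.ne' hy.2.ne).sub hpoly
    exact this
  have hGd : ∀ y ∈ Set.Ioo (0:ℝ) 1,
      HasDerivAt G (-(1 - y)⁻¹ - y⁻¹ + 8 * Real.log 2) y := by
    intro y hy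
    rw [hG]; exact hasDerivAt_G y hy.1.ne' hy.2.ne
  have hGcont : ContinuousOn G (Set.Ioc (0:ℝ) 2⁻¹) := by
    intro y hy
    exact ((hGd y ⟨hy.1, lt_of_le_of_lt hy.2 (by norm_num)⟩).continuousAt).continuousWithinAt
  have hGconv : ConvexOn ℝ (Set.Ioc (0:ℝ) 2⁻¹) G := by
    refine (strictConvexOn_of_deriv2_pos (convex_Ioc _ _) hGcont ?_).convexOn
    rw [interior_Ioc]
    intro y hy
    have hy1 : y < 1 := lt_trans hy.2 (by norm_num)
    have hev : deriv G =ᶠ[nhds y]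
        (fun z : ℝ => -(1 - z)⁻¹ - z⁻¹ + 8 * Real.log 2) := by
      filter_upwards [Ioo_mem_nhds hy.1 hy1] with z hz
      exact (hGd z hz).deriv
    have h2 : deriv^[2] G y = deriv (deriv G) y := rfl
    rw [h2, hev.deriv_eq, (hasDerivAt_G' y hy.1.ne' hy1.ne).deriv]
    have hA : 0 < 1 - y := by linarith
    have hB : (1 - y)⁻¹ < y⁻¹ := by
      apply inv_strictAnti₀ hy.1
      have := hy.2
      have : y < 1 - y := by
        rw [lt_sub_iff_add_lt]
        calc y + y < 2⁻¹ + 2⁻¹ := by linarith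
        _ = 1 := by norm_num
      linarith
    have hC : 0 < (1 - y)⁻¹ := inv_pos.2 hA
    nlinarith
  have hGhalf : G 2⁻¹ = 0 := by rw [hG]; norm_num
  have hclose : ∀ a b : ℝ, a ∈ Set.Ioc (0:ℝ) 2⁻¹ → b ∈ Set.Ioc (0:ℝ) 2⁻¹ → a ≤ b →
      G a ≤ 0 → G b ≤ 0 := by
    intro a b ha hb hab hGa
    have hmem : ((2:ℝ)⁻¹) ∈ Set.Ioc (0:ℝ) 2⁻¹ := ⟨by norm_num, le_refl _⟩
    have hseg : b ∈ segment ℝ a 2⁻¹ := by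
      rw [segment_eq_Icc (le_trans hab hb.2)]
      exact ⟨hab, hb.2⟩
    have := hGconv.le_on_segment ha hmem hseg
    rw [hGhalf] at this
    exact le_trans this (max_le hGa le_rfl)
  have hFcont : Continuous F := by
    rw [hFdef]
    exact Real.binEntropy_continuous.sub (by fun_prop)
  have hF0 : F 0 = 0 := by rw [hFdef]; simp
  have hFhalf : F 2⁻¹ = 0 := by
    rw [hFdef]; simp only [Real.binEntropy_two_inv]; ring
  have key : 0 ≤ F x := by
    by_cases hGx : G x ≤ 0
    · have hanti : AntitoneOn F (Set.Icc x 2⁻¹) := by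
        apply antitoneOn_of_deriv_nonpos (convex_Icc _ _) hFcont.continuousOn
        · rw [interior_Icc]
          intro y hy
          exact (hF y ⟨lt_trans hx0' hy.1,
            lt_trans hy.2 (by norm_num)⟩).differentiableAt.differentiableWithinAt
        · rw [interior_Icc]
          intro y hy
          rw [(hF y ⟨lt_trans hx0' hy.1, lt_trans hy.2 (by norm_num)⟩).deriv]
          exact hclose x y ⟨hx0', hx2'⟩ ⟨lt_trans hx0' hy.1, le_of_lt hy.2⟩
            (le_of_lt hy.1) hGx
      have := hanti ⟨le_refl x, hx2'⟩ ⟨hx2', le_refl _⟩ hx2'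
      rw [hFhalf] at this
      exact this
    · push_neg at hGx
      have hmono : MonotoneOn F (Set.Icc 0 x) := by
        apply monotoneOn_of_deriv_nonneg (convex_Icc _ _) hFcont.continuousOn
        · rw [interior_Icc]
          intro y hy
          exact (hF y ⟨hy.1, lt_of_lt_of_le (lt_of_lt_of_le hy.2 hx2')
            (by norm_num)⟩).differentiableAt.differentiableWithinAt
        · rw [interior_Icc]
          intro y hy
          rw [(hF y ⟨hy.1, lt_of_lt_of_le (lt_of_lt_of_le hy.2 hx2') (by norm_num)⟩).deriv]
          by_contra hcon
          push_neg at hcon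
          have := hclose y x ⟨hy.1, le_trans (le_of_lt hy.2) hx2'⟩ ⟨hx0', hx2'⟩
            (le_of_lt hy.2) (le_of_lt hcon)
          linarith
      have := hmono ⟨le_refl 0, hx0⟩ ⟨hx0, le_refl x⟩ hx0
      rw [hF0] at this
      exact this
  rw [hFdef] at key
  simp only at key
  linarith

private lemma four_mul_le_binEntropy (x : ℝ) (h0 : 0 ≤ x) (h1 : x ≤ 1) :
    4 * Real.log 2 * (x * (1 - x)) ≤ Real.binEntropy x := by
  rcases le_total x (1 / 2) with h | h
  · exact F_nonneg_half x h0 h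
  · have := F_nonneg_half (1 - x) (by linarith) (by linarith)
    have e : (1 - x) * (1 - (1 - x)) = x * (1 - x) := by ring
    rw [e, Real.binEntropy_one_sub] at this
    exact this

private lemma sqrt_prod' {ι : Type*} (s : Finset ι) (g : ι → ℝ) (h : ∀ i ∈ s, 0 ≤ g i) :
    Real.sqrt (∏ i ∈ s, g i) = ∏ i ∈ s, Real.sqrt (g i) := by
  induction s using Finset.cons_induction with
  | empty => simp
  | cons a s ha ih =>
    rw [Finset.prod_cons, Finset.prod_cons,
      Real.sqrt_mul (h a (Finset.mem_cons_self a s)),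
      ih (fun i hi => h i (Finset.mem_cons_of_mem hi))]

private lemma pe_bound {V : Type*} [Fintype V] (P0 P1 : V → ℝ) (ψ : V → Bool)
    (h0 : ∀ v, 0 ≤ P0 v) (h1 : ∀ v, 0 ≤ P1 v)
    (hs0 : ∑ v, P0 v = 1) (hs1 : ∑ v, P1 v = 1)
    (Pe : ℝ) (hPe : Pe = ∑ v, (if ψ v = true then (1/2) * P0 v else (1/2) * P1 v)) :
    (∑ v, Real.sqrt (P0 v * P1 v)) ^ 2 ≤ 4 * Pe * (1 - Pe) ∧ 0 ≤ Pe ∧ Pe ≤ 1 := by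
  set S : ℝ := ∑ v, min (P0 v) (P1 v) with hS
  set B : ℝ := ∑ v, Real.sqrt (P0 v * P1 v) with hB
  have hS0 : 0 ≤ S := Finset.sum_nonneg fun v _ => le_min (h0 v) (h1 v)
  have hlo : (1/2) * S ≤ Pe := by
    rw [hPe, hS, Finset.mul_sum]
    apply Finset.sum_le_sum
    intro v _
    cases hv : ψ v
    · simp only [hv, Bool.false_eq_true, if_false]
      nlinarith [min_le_right (P0 v) (P1 v)]
    · simp only [hv, if_true]
      nlinarith [min_le_left (P0 v) (P1 v)]
  have hhi : Pe ≤ 1 - (1/2) * S := by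
    have step : Pe ≤ ∑ v, ((1/2) * (P0 v + P1 v) - (1/2) * min (P0 v) (P1 v)) := by
      rw [hPe]
      apply Finset.sum_le_sum
      intro v _
      cases hv : ψ v
      · simp only [hv, Bool.false_eq_true, if_false]
        nlinarith [min_le_left (P0 v) (P1 v)]
      · simp only [hv, if_true]
        nlinarith [min_le_right (P0 v) (P1 v)]
    have : ∑ v, ((1/2) * (P0 v + P1 v) - (1/2) * min (P0 v) (P1 v))
        = 1 - (1/2) * S := by
      rw [Finset.sum_sub_distrib, ← Finset.mul_sum, ← Finset.mul_sum,
        Finset.sum_add_distrib, hs0, hs1, hS]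
      ring
    linarith
  -- Cauchy–Schwarz step
  have hCS := Finset.sum_mul_sq_le_sq_mul_sq Finset.univ
    (fun v => |Real.sqrt (P0 v) - Real.sqrt (P1 v)|)
    (fun v => Real.sqrt (P0 v) + Real.sqrt (P1 v))
  have hpt : ∀ v : V, |Real.sqrt (P0 v) - Real.sqrt (P1 v)|
      * (Real.sqrt (P0 v) + Real.sqrt (P1 v)) = |P0 v - P1 v| := by
    intro v
    rw [← abs_of_nonneg (by positivity : (0:ℝ) ≤ Real.sqrt (P0 v) + Real.sqrt (P1 v)),
      ← abs_mul]
    congr 1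
    have e : (Real.sqrt (P0 v) - Real.sqrt (P1 v)) * (Real.sqrt (P0 v) + Real.sqrt (P1 v))
        = Real.sqrt (P0 v) ^ 2 - Real.sqrt (P1 v) ^ 2 := by ring
    rw [e, Real.sq_sqrt (h0 v), Real.sq_sqrt (h1 v)]
  have hsq0 : ∀ v : V, (|Real.sqrt (P0 v) - Real.sqrt (P1 v)|) ^ 2
      = P0 v + P1 v - 2 * Real.sqrt (P0 v * P1 v) := by
    intro v
    rw [sq_abs, sub_sq, Real.sq_sqrt (h0 v), Real.sq_sqrt (h1 v),
      Real.sqrt_mul (h0 v)]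
    ring
  have hsq1 : ∀ v : V, (Real.sqrt (P0 v) + Real.sqrt (P1 v)) ^ 2
      = P0 v + P1 v + 2 * Real.sqrt (P0 v * P1 v) := by
    intro v
    rw [add_sq, Real.sq_sqrt (h0 v), Real.sq_sqrt (h1 v), Real.sqrt_mul (h0 v)]
    ring
  have habs : ∀ v : V, |P0 v - P1 v| = P0 v + P1 v - 2 * min (P0 v) (P1 v) := by
    intro v
    rcases le_total (P0 v) (P1 v) with h | h
    · rw [abs_of_nonpos (by linarith), min_eq_left h]; ring
    · rw [abs_of_nonneg (by linarith), min_eq_right h]; ring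
  have hsum0 : ∑ v, (|Real.sqrt (P0 v) - Real.sqrt (P1 v)|) ^ 2 = 2 - 2 * B := by
    simp only [hsq0]
    rw [Finset.sum_sub_distrib, Finset.sum_add_distrib, hs0, hs1, ← Finset.mul_sum, hB]
    ring
  have hsum1 : ∑ v, (Real.sqrt (P0 v) + Real.sqrt (P1 v)) ^ 2 = 2 + 2 * B := by
    simp only [hsq1]
    rw [Finset.sum_add_distrib, Finset.sum_add_distrib, hs0, hs1, ← Finset.mul_sum, hB]
    ring
  have hsumabs : ∑ v, |P0 v - P1 v| = 2 - 2 * S := by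
    simp only [habs]
    rw [Finset.sum_sub_distrib, Finset.sum_add_distrib, hs0, hs1, ← Finset.mul_sum, hS]
    ring
  simp only [hpt] at hCS
  rw [hsumabs, hsum0, hsum1] at hCS
  refine ⟨?_, by linarith, by linarith⟩
  nlinarith [hCS, mul_nonneg (by linarith : (0:ℝ) ≤ Pe - (1/2) * S)
    (by linarith : (0:ℝ) ≤ 1 - (1/2) * S - Pe)]

private lemma binH_eq_binEntropy (x : ℝ) : binH x = Real.binEntropy x / Real.log 2 := by
  simp only [binH, Real.binEntropy, Real.logb, Real.log_inv]
  ring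

/-- transmitting a uniform bit over T uses of BSC(ε): any encoder/decoder
satisfies 1 − h(P_e) ≤ 1 − (4ε(1−ε))^T; hence achieving P_e ≤ p requires
T ≥ log(1/h(p)) / log(1/(4ε(1−ε))). -/
theorem one_bit_over_bsc_converse
    (ε : ℝ) (hε0 : 0 < ε) (hε1 : ε < 1/2)
    (T : ℕ) (f : Bool → Fin T → Bool) (ψ : (Fin T → Bool) → Bool)
    (p : Bool × (Fin T → Bool) → ℝ)
    (hp : ∀ w v, p (w, v) = (1/2) * ∏ t, BSC ε (f w t) (v t))
    (Pe : ℝ)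
    (hPe : Pe = ∑ z : Bool × (Fin T → Bool), if ψ z.2 ≠ z.1 then p z else 0) :
    1 - binH Pe ≤ 1 - (4 * ε * (1 - ε)) ^ T ∧
    ∀ q : ℝ, 0 < q → q < 1/2 → Pe ≤ q →
      (T : ℝ) ≥ Real.logb 2 (1 / binH q) / Real.logb 2 (1 / (4 * ε * (1 - ε))) := by
  have hε1' : ε < 1 := by linarith
  have hd0 : 0 < 4 * ε * (1 - ε) := by nlinarith
  have hd1 : 4 * ε * (1 - ε) < 1 := by nlinarith [sq_nonneg (1 - 2 * ε), pow_pos (show (0:ℝ) < 1 - 2*ε by linarith) 2]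
  have hBSCpos : ∀ a b : Bool, 0 < BSC ε a b := by
    intro a b
    simp only [BSC]
    split <;> linarith
  -- rewrite Pe
  have hPe2 : Pe = ∑ v : Fin T → Bool,
      (if ψ v = true then (1/2) * ∏ t, BSC ε (f false t) (v t)
       else (1/2) * ∏ t, BSC ε (f true t) (v t)) := by
    rw [hPe, Fintype.sum_prod_type, Fintype.sum_bool, ← Finset.sum_add_distrib]
    apply Finset.sum_congr rfl
    intro v _
    cases hv : ψ v
    · simp [hv, hp]
    · simp [hv, hp]
  -- sum-to-one facts
  have hsum : ∀ w : Bool, ∑ v : Fin T → Bool, (∏ t, BSC ε (f w t) (v t)) = 1 := by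
    intro w
    rw [← Fintype.piFinset_univ, Finset.sum_prod_piFinset]
    apply Finset.prod_eq_one
    intro t _
    rw [Fintype.sum_bool]
    cases f w t <;> simp [BSC]
  obtain ⟨hB2, hPe0, hPe1⟩ := pe_bound
    (fun v => ∏ t, BSC ε (f false t) (v t)) (fun v => ∏ t, BSC ε (f true t) (v t)) ψ
    (fun v => Finset.prod_nonneg fun t _ => (hBSCpos _ _).le)
    (fun v => Finset.prod_nonneg fun t _ => (hBSCpos _ _).le)
    (hsum false) (hsum true) Pe hPe2
  -- Bhattacharyya lower bound
  have hfold : ∀ v : Fin T → Bool,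
      Real.sqrt ((∏ t, BSC ε (f false t) (v t)) * ∏ t, BSC ε (f true t) (v t))
      = ∏ t, Real.sqrt (BSC ε (f false t) (v t) * BSC ε (f true t) (v t)) := by
    intro v
    rw [← Finset.prod_mul_distrib]
    exact sqrt_prod' _ _ fun t _ => mul_nonneg (hBSCpos _ _).le (hBSCpos _ _).le
  have hexch : (∑ v : Fin T → Bool,
        ∏ t, Real.sqrt (BSC ε (f false t) (v t) * BSC ε (f true t) (v t)))
      = ∏ t, ∑ b : Bool, Real.sqrt (BSC ε (f false t) b * BSC ε (f true t) b) := by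
    rw [← Fintype.piFinset_univ]
    exact Finset.sum_prod_piFinset Finset.univ
      (fun t b => Real.sqrt (BSC ε (f false t) b * BSC ε (f true t) b))
  have hs2 : 2 * Real.sqrt (ε * (1 - ε)) ≤ 1 := by
    rw [Real.sqrt_mul hε0.le]
    nlinarith [Real.sq_sqrt hε0.le, Real.sq_sqrt (show (0:ℝ) ≤ 1 - ε by linarith),
      sq_nonneg (Real.sqrt ε - Real.sqrt (1 - ε))]
  have hfac : ∀ t : Fin T, 2 * Real.sqrt (ε * (1 - ε))
      ≤ ∑ b : Bool, Real.sqrt (BSC ε (f false t) b * BSC ε (f true t) b) := by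
    intro t
    rw [Fintype.sum_bool]
    cases hft : f false t <;> cases htt : f true t <;> simp only [BSC] <;> norm_num
    · rw [Real.sqrt_mul_self hε0.le,
        Real.sqrt_mul_self (show (0:ℝ) ≤ 1 - ε by linarith)]
      linarith
    · rw [mul_comm (1 - ε) ε]
      linarith
    · rw [mul_comm (1 - ε) ε]
      linarith
    · rw [Real.sqrt_mul_self hε0.le,
        Real.sqrt_mul_self (show (0:ℝ) ≤ 1 - ε by linarith)]
      linarith
  have hBlb : (2 * Real.sqrt (ε * (1 - ε))) ^ T
      ≤ ∑ v : Fin T → Bool,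
        Real.sqrt ((∏ t, BSC ε (f false t) (v t)) * ∏ t, BSC ε (f true t) (v t)) := by
    simp only [hfold]
    rw [hexch]
    calc (2 * Real.sqrt (ε * (1 - ε))) ^ T
        = ∏ _t : Fin T, (2 * Real.sqrt (ε * (1 - ε))) := by
          rw [Finset.prod_const, Finset.card_univ, Fintype.card_fin]
      _ ≤ _ := Finset.prod_le_prod (fun t _ => by positivity) (fun t _ => hfac t)
  have hsq2 : (2 * Real.sqrt (ε * (1 - ε))) ^ 2 = 4 * ε * (1 - ε) := by
    rw [mul_pow, Real.sq_sqrt (by nlinarith : (0:ℝ) ≤ ε * (1 - ε))]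
    ring
  have hdT : (4 * ε * (1 - ε)) ^ T
      ≤ (∑ v : Fin T → Bool,
        Real.sqrt ((∏ t, BSC ε (f false t) (v t)) * ∏ t, BSC ε (f true t) (v t))) ^ 2 := by
    calc (4 * ε * (1 - ε)) ^ T = ((2 * Real.sqrt (ε * (1 - ε))) ^ T) ^ 2 := by
          rw [← hsq2, ← pow_mul, ← pow_mul, Nat.mul_comm]
      _ ≤ _ := by
          apply pow_le_pow_left₀ (by positivity) hBlb
  have hkey : (4 * ε * (1 - ε)) ^ T ≤ 4 * Pe * (1 - Pe) := le_trans hdT hB2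
  have hbinH : (4 * ε * (1 - ε)) ^ T ≤ binH Pe := by
    rw [binH_eq_binEntropy, le_div_iff₀ (Real.log_pos one_lt_two)]
    calc (4 * ε * (1 - ε)) ^ T * Real.log 2
        ≤ (4 * Pe * (1 - Pe)) * Real.log 2 :=
          mul_le_mul_of_nonneg_right hkey (Real.log_nonneg one_le_two)
      _ = 4 * Real.log 2 * (Pe * (1 - Pe)) := by ring
      _ ≤ Real.binEntropy Pe := four_mul_le_binEntropy Pe hPe0 hPe1
  refine ⟨by linarith, ?_⟩
  intro q hq0 hq2 hqPe
  have hbqmono : binH Pe ≤ binH q := by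
    rw [binH_eq_binEntropy, binH_eq_binEntropy]
    rw [div_le_div_iff_of_pos_right (Real.log_pos one_lt_two)]
    apply Real.binEntropy_strictMonoOn.monotoneOn ⟨hPe0, by norm_num; linarith⟩
      ⟨by linarith, by norm_num; linarith⟩ hqPe
  have hbq : (4 * ε * (1 - ε)) ^ T ≤ binH q := le_trans hbinH hbqmono
  have hbqpos : 0 < binH q := by
    rw [binH_eq_binEntropy]
    exact div_pos (Real.binEntropy_pos hq0 (by linarith)) (Real.log_pos one_lt_two)
  have hlogb : (T : ℝ) * Real.logb 2 (4 * ε * (1 - ε)) ≤ Real.logb 2 (binH q) := by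
    have := (Real.logb_le_logb one_lt_two (pow_pos hd0 T) hbqpos).mpr hbq
    rwa [Real.logb_pow] at this
  have hdneg : Real.logb 2 (4 * ε * (1 - ε)) < 0 := Real.logb_neg one_lt_two hd0 hd1
  rw [ge_iff_le, one_div, one_div, Real.logb_inv, Real.logb_inv, neg_div_neg_eq,
    div_le_iff_of_neg hdneg]
  linarith
end
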